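/- arXiv:2407.06962 — 4 statements merged into one kernel-verified Lean document; each statement's English description precedes it below -/
import Mathlib

section
/- Let λ : ℤ≥1 × ℤ≥1 → ℂ satisfy the Hecke-type relation λ(a,b) = Σ_{d | gcd(a,b)} μ(d) λ(a/d, 1) λ(1, b/d) for all a, b ≥ 1, and suppose there is a constant K such that Σ_{n ≤ x} |λ(n,1)|² ≤ K·x and Σ_{n ≤ x} |λ(1,n)|² ≤ K·x for all real x ≥ 1. Then for every ε > 0 there is a constant C(ε,K) such that for all real X ≥ 1, Σ over pairs (a,b) of positive integers with X < a²b ≤ 2X of |λ(a,b)|²/(a³b²) is at most C(ε,K)·X^{−1+ε}. -/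
open scoped ArithmeticFunction
open scoped ArithmeticFunction.Moebius

open Finset
lemma my_tele (w : ℕ → ℝ) : ∀ (N n : ℕ), n ≤ N + 1 →
    ∑ m ∈ Finset.Icc n N, (w m - w (m+1)) = w n - w (N+1) := by
  intro N
  induction N with
  | zero => intro n hn; interval_cases n <;> simp
  | succ N ih =>
      intro n hn
      rcases eq_or_lt_of_le hn with h | h
      · subst h; rw [Finset.Icc_eq_empty (by omega)]; simp
      · have hn' : n ≤ N + 1 := by omega
        rw [Finset.sum_Icc_succ_top hn', ih n hn']; ring

lemma my_abel (f w : ℕ → ℝ) (N : ℕ) (S : Finset ℕ) (hS : S ⊆ Finset.Icc 1 N) :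
    ∑ n ∈ S, f n * w n
      = (∑ m ∈ Finset.Icc 1 N, (w m - w (m+1)) * ∑ n ∈ S.filter (· ≤ m), f n)
        + w (N+1) * ∑ n ∈ S, f n := by
  have h1 : ∀ n ∈ S, f n * w n
      = f n * (∑ m ∈ Finset.Icc n N, (w m - w (m+1))) + f n * w (N+1) := by
    intro n hn
    have hn' : n ≤ N := (Finset.mem_Icc.mp (hS hn)).2
    rw [my_tele w N n (by omega)]; ring
  rw [Finset.sum_congr rfl h1, Finset.sum_add_distrib]
  congr 1
  · calc ∑ n ∈ S, f n * (∑ m ∈ Finset.Icc n N, (w m - w (m+1)))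
        = ∑ n ∈ S, ∑ m ∈ Finset.Icc n N, f n * (w m - w (m+1)) := by
          simp only [Finset.mul_sum]
      _ = ∑ n ∈ S, ∑ m ∈ Finset.Icc 1 N, if n ≤ m then f n * (w m - w (m+1)) else 0 := by
          refine Finset.sum_congr rfl fun n hn => ?_
          have hn1 : 1 ≤ n := (Finset.mem_Icc.mp (hS hn)).1
          have : Finset.Icc n N = (Finset.Icc 1 N).filter (fun m => n ≤ m) := by
            ext m; simp only [Finset.mem_Icc, Finset.mem_filter]; omega
          rw [this, Finset.sum_filter]
      _ = ∑ m ∈ Finset.Icc 1 N, ∑ n ∈ S, if n ≤ m then f n * (w m - w (m+1)) else 0 :=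
          Finset.sum_comm
      _ = ∑ m ∈ Finset.Icc 1 N, (w m - w (m+1)) * ∑ n ∈ S.filter (· ≤ m), f n := by
          refine Finset.sum_congr rfl fun m _ => ?_
          rw [← Finset.sum_filter, Finset.mul_sum]
          exact Finset.sum_congr rfl fun n _ => by ring
  · rw [Finset.mul_sum]
    exact Finset.sum_congr rfl fun n _ => by ring

lemma my_inv_sq_tail (N : ℕ) (T : ℝ) (hT : 0 < T) :
    ∑ m ∈ (Finset.Icc 1 N).filter (fun m : ℕ => T < (m:ℝ)), ((m:ℝ)^2)⁻¹ ≤ 2 / T := by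
  have hset : (Finset.Icc 1 N).filter (fun m : ℕ => T < (m:ℝ)) = Finset.Ioo ⌊T⌋₊ (N+1) := by
    ext m
    simp only [Finset.mem_filter, Finset.mem_Icc, Finset.mem_Ioo]
    constructor
    · rintro ⟨⟨h1, h2⟩, h3⟩
      exact ⟨(Nat.floor_lt hT.le).mpr h3, by omega⟩
    · rintro ⟨h1, h2⟩
      have : T < (m:ℝ) := (Nat.floor_lt hT.le).mp h1
      exact ⟨⟨by omega, by omega⟩, this⟩
  rw [hset]
  calc ∑ m ∈ Finset.Ioo ⌊T⌋₊ (N+1), ((m:ℝ)^2)⁻¹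
      ≤ 2 / ((⌊T⌋₊ : ℝ) + 1) := by
        have := sum_Ioo_inv_sq_le (α := ℝ) ⌊T⌋₊ (N+1)
        simpa using this
    _ ≤ 2 / T := by
        apply div_le_div_of_nonneg_left (by norm_num) hT
        exact (Nat.lt_floor_add_one T).le

lemma my_tail_bound (f : ℕ → ℝ) (hf : ∀ n, 0 ≤ f n) (K : ℝ)
    (hsum : ∀ m : ℕ, 1 ≤ m → ∑ n ∈ Finset.Icc 1 m, f n ≤ K * m)
    (N : ℕ) (T : ℝ) (hT : 0 < T) :
    ∑ n ∈ (Finset.Icc 1 N).filter (fun n : ℕ => T < (n:ℝ)), f n / (n:ℝ)^2 ≤ 7 * K / T := by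
  have hK : 0 ≤ K := by
    have h := hsum 1 le_rfl
    simp at h
    exact le_trans (hf 1) (by linarith)
  set S := (Finset.Icc 1 N).filter (fun n : ℕ => T < (n:ℝ)) with hSdef
  have hS : S ⊆ Finset.Icc 1 N := Finset.filter_subset _ _
  have habel := my_abel f (fun m : ℕ => ((m:ℝ)^2)⁻¹) N S hS
  have heq : ∑ n ∈ S, f n / (n:ℝ)^2 = ∑ n ∈ S, f n * ((n:ℝ)^2)⁻¹ :=
    Finset.sum_congr rfl fun n _ => div_eq_mul_inv _ _
  rw [heq, habel]
  have hF : ∀ m : ℕ, 1 ≤ m → ∑ n ∈ S.filter (· ≤ m), f n ≤ K * m := by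
    intro m hm
    refine le_trans (Finset.sum_le_sum_of_subset_of_nonneg ?_ fun n _ _ => hf n) (hsum m hm)
    intro n hn
    simp only [Finset.mem_filter, Finset.mem_Icc, hSdef] at hn ⊢
    omega
  have hzero : ∀ m : ℕ, ¬ T < (m:ℝ) → ∑ n ∈ S.filter (· ≤ m), f n = 0 := by
    intro m hm
    apply Finset.sum_eq_zero
    intro n hn
    simp only [Finset.mem_filter, Finset.mem_Icc, hSdef] at hn
    exfalso
    exact hm (lt_of_lt_of_le hn.1.2 (by exact_mod_cast hn.2))
  have main : (∑ m ∈ Finset.Icc 1 N,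
        ((fun m : ℕ => ((m:ℝ)^2)⁻¹) m - (fun m : ℕ => ((m:ℝ)^2)⁻¹) (m+1)) * ∑ n ∈ S.filter (· ≤ m), f n)
      ≤ 6 * K / T := by
    calc (∑ m ∈ Finset.Icc 1 N,
        ((fun m : ℕ => ((m:ℝ)^2)⁻¹) m - (fun m : ℕ => ((m:ℝ)^2)⁻¹) (m+1)) * ∑ n ∈ S.filter (· ≤ m), f n)
        ≤ ∑ m ∈ Finset.Icc 1 N, (if T < (m:ℝ) then 3 * K * ((m:ℝ)^2)⁻¹ else 0) := by
          refine Finset.sum_le_sum fun m hm => ?_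
          have hm1 : 1 ≤ m := (Finset.mem_Icc.mp hm).1
          have hmr : (1:ℝ) ≤ (m:ℝ) := by exact_mod_cast hm1
          by_cases hc : T < (m:ℝ)
          · rw [if_pos hc]
            have h1 : ∑ n ∈ S.filter (· ≤ m), f n ≤ K * m := hF m hm1
            simp only []
            have hcast : (((m+1:ℕ)):ℝ) = (m:ℝ) + 1 := by push_cast; ring
            rw [hcast]
            have hd : ((m:ℝ)^2)⁻¹ - (((m:ℝ)+1)^2)⁻¹ ≤ 3 / (m:ℝ)^3 := by
              rw [inv_sub_inv (by positivity) (by positivity), div_le_div_iff₀ (by positivity) (by positivity)]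
              nlinarith [sq_nonneg ((m:ℝ) - 1), sq_nonneg (m:ℝ)]
            have hd0 : (0:ℝ) ≤ ((m:ℝ)^2)⁻¹ - (((m:ℝ)+1)^2)⁻¹ := by
              rw [sub_nonneg]
              apply inv_anti₀ (by positivity)
              nlinarith
            calc (((m:ℝ)^2)⁻¹ - (((m:ℝ)+1)^2)⁻¹) * ∑ n ∈ S.filter (· ≤ m), f n
                ≤ (((m:ℝ)^2)⁻¹ - (((m:ℝ)+1)^2)⁻¹) * (K * m) :=
                  mul_le_mul_of_nonneg_left h1 hd0
              _ ≤ (3 / (m:ℝ)^3) * (K * m) := mul_le_mul_of_nonneg_right hd (by positivity)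
              _ = 3 * K * ((m:ℝ)^2)⁻¹ := by field_simp
          · rw [if_neg hc, hzero m hc, mul_zero]
      _ = 3 * K * ∑ m ∈ (Finset.Icc 1 N).filter (fun m : ℕ => T < (m:ℝ)), ((m:ℝ)^2)⁻¹ := by
          rw [← Finset.sum_filter, Finset.mul_sum]
      _ ≤ 3 * K * (2 / T) := mul_le_mul_of_nonneg_left (my_inv_sq_tail N T hT) (by positivity)
      _ = 6 * K / T := by ring
  have last : (fun m : ℕ => ((m:ℝ)^2)⁻¹) (N+1) * ∑ n ∈ S, f n ≤ K / T := by
    simp only []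
    rcases Finset.eq_empty_or_nonempty S with h | h
    · rw [h]; simp; positivity
    · obtain ⟨n, hn⟩ := h
      simp only [Finset.mem_filter, Finset.mem_Icc, hSdef] at hn
      have hTN : T < (N:ℝ) + 1 := by
        calc T < (n:ℝ) := hn.2
          _ ≤ (N:ℝ) := by exact_mod_cast hn.1.2
          _ < (N:ℝ) + 1 := by linarith
      have hFN : ∑ n ∈ S, f n ≤ K * N := by
        have h0 := hF N (by omega)
        have hfix : S.filter (· ≤ N) = S :=
          Finset.filter_true_of_mem fun x hx => (Finset.mem_Icc.mp (hS hx)).2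
        rwa [hfix] at h0
      have hcast : (((N+1:ℕ)):ℝ) = (N:ℝ) + 1 := by push_cast; ring
      rw [hcast]
      calc (((N:ℝ)+1)^2)⁻¹ * ∑ n ∈ S, f n ≤ (((N:ℝ)+1)^2)⁻¹ * (K * ((N:ℝ)+1)) := by
            apply mul_le_mul_of_nonneg_left _ (by positivity)
            calc ∑ n ∈ S, f n ≤ K * N := hFN
              _ ≤ K * ((N:ℝ)+1) := by nlinarith [Nat.cast_nonneg (α := ℝ) N]
        _ = K / ((N:ℝ)+1) := by
            have : ((N:ℝ)+1) ≠ 0 := by positivity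
            field_simp
        _ ≤ K / T := div_le_div_of_nonneg_left hK hT hTN.le
  have hring : 6 * K / T + K / T = 7 * K / T := by ring
  linarith

lemma my_div_linear (f : ℕ → ℝ) (hf : ∀ n, 0 ≤ f n) (K : ℝ)
    (hsum : ∀ m : ℕ, 1 ≤ m → ∑ n ∈ Finset.Icc 1 m, f n ≤ K * m) (N : ℕ) :
    ∑ n ∈ Finset.Icc 1 N, f n / (n:ℝ) ≤ K * (1 + Real.log ((N:ℝ)+1)) := by
  have hK : 0 ≤ K := by
    have h := hsum 1 le_rfl
    simp at h
    exact le_trans (hf 1) (by linarith)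
  have habel := my_abel f (fun m : ℕ => ((m:ℝ))⁻¹) N (Finset.Icc 1 N) (le_refl _)
  have heq : ∑ n ∈ Finset.Icc 1 N, f n / (n:ℝ) = ∑ n ∈ Finset.Icc 1 N, f n * ((n:ℝ))⁻¹ :=
    Finset.sum_congr rfl fun n _ => div_eq_mul_inv _ _
  rw [heq, habel]
  have hF : ∀ m : ℕ, 1 ≤ m → ∑ n ∈ (Finset.Icc 1 N).filter (· ≤ m), f n ≤ K * m := by
    intro m hm
    refine le_trans (Finset.sum_le_sum_of_subset_of_nonneg ?_ fun n _ _ => hf n) (hsum m hm)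
    intro n hn
    simp only [Finset.mem_filter, Finset.mem_Icc] at hn ⊢
    omega
  have main : (∑ m ∈ Finset.Icc 1 N,
        ((fun m : ℕ => ((m:ℝ))⁻¹) m - (fun m : ℕ => ((m:ℝ))⁻¹) (m+1)) * ∑ n ∈ (Finset.Icc 1 N).filter (· ≤ m), f n)
      ≤ K * Real.log ((N:ℝ)+1) := by
    calc (∑ m ∈ Finset.Icc 1 N,
        ((fun m : ℕ => ((m:ℝ))⁻¹) m - (fun m : ℕ => ((m:ℝ))⁻¹) (m+1)) * ∑ n ∈ (Finset.Icc 1 N).filter (· ≤ m), f n)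
        ≤ ∑ m ∈ Finset.Icc 1 N, K * (Real.log ((m:ℝ)+1) - Real.log (m:ℝ)) := by
          refine Finset.sum_le_sum fun m hm => ?_
          have hm1 : 1 ≤ m := (Finset.mem_Icc.mp hm).1
          have hmr : (1:ℝ) ≤ (m:ℝ) := by exact_mod_cast hm1
          simp only []
          have hcast : (((m+1:ℕ)):ℝ) = (m:ℝ) + 1 := by push_cast; ring
          rw [hcast]
          have hd : ((m:ℝ))⁻¹ - (((m:ℝ)+1))⁻¹ = ((m:ℝ) * ((m:ℝ)+1))⁻¹ := by
            rw [inv_sub_inv (by positivity) (by positivity)]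
            rw [mul_inv]
            field_simp; ring
          have hlog : ((m:ℝ)+1)⁻¹ ≤ Real.log ((m:ℝ)+1) - Real.log (m:ℝ) := by
            have h1 : Real.log ((m:ℝ)/((m:ℝ)+1)) ≤ (m:ℝ)/((m:ℝ)+1) - 1 :=
              Real.log_le_sub_one_of_pos (by positivity)
            rw [Real.log_div (by positivity) (by positivity)] at h1
            have h2 : (m:ℝ)/((m:ℝ)+1) - 1 = -(((m:ℝ)+1)⁻¹) := by field_simp; ring
            rw [h2] at h1
            linarith
          calc (((m:ℝ))⁻¹ - (((m:ℝ)+1))⁻¹) * ∑ n ∈ (Finset.Icc 1 N).filter (· ≤ m), f n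
              ≤ (((m:ℝ))⁻¹ - (((m:ℝ)+1))⁻¹) * (K * m) := by
                apply mul_le_mul_of_nonneg_left (hF m hm1)
                rw [hd]; positivity
            _ = K * ((m:ℝ) * ((m:ℝ) * ((m:ℝ)+1))⁻¹) := by rw [hd]; ring
            _ = K * (((m:ℝ)+1))⁻¹ := by
                congr 1
                rw [mul_inv]
                field_simp
            _ ≤ K * (Real.log ((m:ℝ)+1) - Real.log (m:ℝ)) :=
                mul_le_mul_of_nonneg_left hlog hK
      _ = K * ∑ m ∈ Finset.Icc 1 N, (Real.log ((m:ℝ)+1) - Real.log (m:ℝ)) := by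
          rw [Finset.mul_sum]
      _ ≤ K * Real.log ((N:ℝ)+1) := by
          apply mul_le_mul_of_nonneg_left _ hK
          have := my_tele (fun m : ℕ => -Real.log (m:ℝ)) N 1 (by omega)
          have heq2 : ∑ m ∈ Finset.Icc 1 N, (Real.log ((m:ℝ)+1) - Real.log (m:ℝ))
              = ∑ m ∈ Finset.Icc 1 N, (-Real.log (m:ℝ) - -Real.log (((m+1:ℕ)):ℝ)) := by
            refine Finset.sum_congr rfl fun m _ => ?_
            push_cast
            ring
          rw [heq2, this]
          push_cast
          simp
  have last : (fun m : ℕ => ((m:ℝ))⁻¹) (N+1) * ∑ n ∈ Finset.Icc 1 N, f n ≤ K := by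
    simp only []
    rcases Nat.eq_zero_or_pos N with h | h
    · subst h; simp; exact hK
    · have hFN := hsum N h
      have hcast : (((N+1:ℕ)):ℝ) = (N:ℝ) + 1 := by push_cast; ring
      rw [hcast]
      have hpos : (0:ℝ) < (N:ℝ) + 1 := by positivity
      calc (((N:ℝ)+1))⁻¹ * ∑ n ∈ Finset.Icc 1 N, f n
          ≤ (((N:ℝ)+1))⁻¹ * (K * ((N:ℝ)+1)) := by
            apply mul_le_mul_of_nonneg_left _ (by positivity)
            calc ∑ n ∈ Finset.Icc 1 N, f n ≤ K * N := hFN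
              _ ≤ K * ((N:ℝ)+1) := by nlinarith [Nat.cast_nonneg (α := ℝ) N]
        _ = K := by field_simp
  linarith
open scoped ArithmeticFunction

lemma my_cs (lam : ℕ → ℕ → ℂ) (a b : ℕ)
    (hab : lam a b = ∑ d ∈ (Nat.gcd a b).divisors,
      ((μ d : ℤ) : ℂ) * lam (a / d) 1 * lam 1 (b / d)) :
    ‖lam a b‖ ^ 2 ≤ (∑ d ∈ (Nat.gcd a b).divisors, ((d:ℝ))⁻¹)
      * ∑ d ∈ (Nat.gcd a b).divisors,
          (d:ℝ) * (‖lam (a/d) 1‖ * ‖lam 1 (b/d)‖)^2 := by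
  set D := (Nat.gcd a b).divisors with hD
  have h1 : ‖lam a b‖
      ≤ ∑ d ∈ D, ‖lam (a/d) 1‖ * ‖lam 1 (b/d)‖ := by
    rw [hab]
    refine le_trans (norm_sum_le _ _) (Finset.sum_le_sum fun d hd => ?_)
    rw [norm_mul, norm_mul]
    have hμ : ‖((μ d : ℤ) : ℂ)‖ ≤ 1 := by
      rw [Complex.norm_intCast]
      exact_mod_cast ArithmeticFunction.abs_moebius_le_one
    calc ‖((μ d : ℤ) : ℂ)‖ * ‖lam (a/d) 1‖ * ‖lam 1 (b/d)‖
        ≤ 1 * ‖lam (a/d) 1‖ * ‖lam 1 (b/d)‖ := by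
          apply mul_le_mul_of_nonneg_right _ (norm_nonneg _)
          exact mul_le_mul_of_nonneg_right hμ (norm_nonneg _)
      _ = _ := by ring
  have h2 : (∑ d ∈ D, ‖lam (a/d) 1‖ * ‖lam 1 (b/d)‖)^2
      ≤ (∑ d ∈ D, ((d:ℝ))⁻¹)
        * ∑ d ∈ D, (d:ℝ) * (‖lam (a/d) 1‖ * ‖lam 1 (b/d)‖)^2 := by
    have hcs := Finset.sum_mul_sq_le_sq_mul_sq D
      (fun d => (Real.sqrt d)⁻¹)
      (fun d => Real.sqrt d * (‖lam (a/d) 1‖ * ‖lam 1 (b/d)‖))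
    have he1 : ∀ d ∈ D, (Real.sqrt d)⁻¹
        * (Real.sqrt d * (‖lam (a/d) 1‖ * ‖lam 1 (b/d)‖))
        = ‖lam (a/d) 1‖ * ‖lam 1 (b/d)‖ := by
      intro d hd
      have hd1 : 1 ≤ d := Nat.one_le_iff_ne_zero.mpr (Nat.pos_of_mem_divisors hd).ne'
      have : Real.sqrt d ≠ 0 := by
        have : (0:ℝ) < (d:ℝ) := by exact_mod_cast hd1
        positivity
      field_simp
    have he2 : ∀ d ∈ D, ((Real.sqrt d)⁻¹)^2 = ((d:ℝ))⁻¹ := by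
      intro d hd
      rw [← Real.sqrt_inv]
      exact Real.sq_sqrt (by positivity)
    have he3 : ∀ d ∈ D, (Real.sqrt d * (‖lam (a/d) 1‖ * ‖lam 1 (b/d)‖))^2
        = (d:ℝ) * (‖lam (a/d) 1‖ * ‖lam 1 (b/d)‖)^2 := by
      intro d hd
      rw [mul_pow, Real.sq_sqrt (Nat.cast_nonneg d)]
    rw [Finset.sum_congr rfl he1, Finset.sum_congr rfl he2, Finset.sum_congr rfl he3] at hcs
    exact hcs
  calc ‖lam a b‖ ^ 2
      ≤ (∑ d ∈ D, ‖lam (a/d) 1‖ * ‖lam 1 (b/d)‖)^2 := by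
        apply pow_le_pow_left₀ (norm_nonneg _) h1
    _ ≤ _ := h2


set_option maxHeartbeats 1600000 in
/-- Lemma `RankinSelbergBound`: if `λ(a,b)` satisfies the Hecke-type relation
`λ(a,b) = Σ_{d | (a,b)} μ(d) λ(a/d,1) λ(1,b/d)` and the Rankin–Selberg type
average bounds `Σ_{n ≤ x} |λ(n,1)|² ≤ K x` and `Σ_{n ≤ x} |λ(1,n)|² ≤ K x`,
then `Σ_{X < a²b ≤ 2X} |λ(a,b)|²/(a³b²) ≪_{ε,K} X^{-1+ε}`. -/
theorem rankin_selberg_variant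
    (lam : ℕ → ℕ → ℂ) (K : ℝ)
    (hHecke : ∀ a b : ℕ, 1 ≤ a → 1 ≤ b →
      lam a b = ∑ d ∈ (Nat.gcd a b).divisors,
        ((μ d : ℤ) : ℂ) * lam (a / d) 1 * lam 1 (b / d))
    (hbound1 : ∀ x : ℝ, 1 ≤ x →
      ∑ n ∈ Finset.Icc 1 ⌊x⌋₊, ‖lam n 1‖ ^ 2 ≤ K * x)
    (hbound2 : ∀ x : ℝ, 1 ≤ x →
      ∑ n ∈ Finset.Icc 1 ⌊x⌋₊, ‖lam 1 n‖ ^ 2 ≤ K * x) :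
    ∀ ε : ℝ, 0 < ε → ∃ C : ℝ, ∀ X : ℝ, 1 ≤ X →
      ∑ p ∈ Finset.filter
          (fun p : ℕ × ℕ => (X : ℝ) < (p.1 ^ 2 * p.2 : ℕ) ∧ ((p.1 ^ 2 * p.2 : ℕ) : ℝ) ≤ 2 * X)
          (Finset.Icc 1 ⌊2 * X⌋₊ ×ˢ Finset.Icc 1 ⌊2 * X⌋₊),
        ‖lam p.1 p.2‖ ^ 2 / ((p.1 : ℝ) ^ 3 * (p.2 : ℝ) ^ 2)
      ≤ C * X ^ (-1 + ε : ℝ) := by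
  intro ε hε
  set c : ℝ := (1 + Real.log 3) * (1 + 3/ε) with hc
  have hlog3 : (0:ℝ) ≤ Real.log 3 := Real.log_nonneg (by norm_num)
  have hc0 : 0 < c := by positivity
  refine ⟨7 * K^2 * c^3, ?_⟩
  intro X hX
  have hX0 : (0:ℝ) < X := by linarith
  have hK : 0 ≤ K := by
    have h := hbound1 1 le_rfl
    rw [Nat.floor_one, Finset.Icc_self, Finset.sum_singleton] at h
    nlinarith [sq_nonneg (‖lam 1 1‖)]
  set N := ⌊2 * X⌋₊ with hN
  set A := Finset.Icc 1 N with hA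
  set M := 1 + Real.log ((N:ℝ)+1) with hM
  have hM0 : (0:ℝ) ≤ M := by
    have : (0:ℝ) ≤ Real.log ((N:ℝ)+1) := Real.log_nonneg (by push_cast; linarith [Nat.cast_nonneg (α := ℝ) N])
    linarith
  -- nat versions of the hypotheses
  have hsum1 : ∀ m : ℕ, 1 ≤ m →
      ∑ n ∈ Finset.Icc 1 m, (fun n => ‖lam n 1‖ ^ 2) n ≤ K * m := by
    intro m hm
    have := hbound1 m (by exact_mod_cast hm)
    rwa [Nat.floor_natCast] at this
  have hsum2 : ∀ m : ℕ, 1 ≤ m →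
      ∑ n ∈ Finset.Icc 1 m, (fun n => ‖lam 1 n‖ ^ 2) n ≤ K * m := by
    intro m hm
    have := hbound2 m (by exact_mod_cast hm)
    rwa [Nat.floor_natCast] at this
  have hharm : ∑ n ∈ A, ((n:ℝ))⁻¹ ≤ M := by
    have h := my_div_linear (fun _ => 1) (fun _ => zero_le_one) 1
      (fun m hm => by
        rw [Finset.sum_const, Nat.card_Icc]
        simp) N
    simpa [one_div] using h
  set F := Finset.filter
      (fun p : ℕ × ℕ => (X : ℝ) < (p.1 ^ 2 * p.2 : ℕ) ∧ ((p.1 ^ 2 * p.2 : ℕ) : ℝ) ≤ 2 * X)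
      (A ×ˢ A) with hF
  set h3 : ℕ → ℕ → ℕ → ℝ := fun d a' b' =>
    ((d:ℝ)^4)⁻¹ * (‖lam a' 1‖^2 / (a':ℝ)^3) * (‖lam 1 b'‖^2 / (b':ℝ)^2)
    with hh3
  have h3nonneg : ∀ d a' b', 0 ≤ h3 d a' b' := by
    intro d a' b'
    have := norm_nonneg (lam a' 1)
    positivity
  -- Step A
  have stepA : ∀ p ∈ F, ‖lam p.1 p.2‖ ^ 2 / ((p.1 : ℝ) ^ 3 * (p.2 : ℝ) ^ 2)
      ≤ M * ∑ d ∈ (Nat.gcd p.1 p.2).divisors, h3 d (p.1/d) (p.2/d) := by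
    rintro ⟨a, b⟩ hp
    simp only [hF, Finset.mem_filter, Finset.mem_product, hA, Finset.mem_Icc] at hp
    obtain ⟨⟨⟨ha1, haN⟩, ⟨hb1, hbN⟩⟩, _⟩ := hp
    have hg1 : 0 < Nat.gcd a b := Nat.gcd_pos_of_pos_left b (by omega)
    have hgN : Nat.gcd a b ≤ N := le_trans (Nat.gcd_le_left b (by omega)) haN
    have hcs := my_cs lam a b (hHecke a b ha1 hb1)
    have hdivsub : (Nat.gcd a b).divisors ⊆ A := by
      intro d hd
      have hd1 : 0 < d := Nat.pos_of_mem_divisors hd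
      have hd2 : d ≤ Nat.gcd a b := Nat.le_of_dvd hg1 (Nat.dvd_of_mem_divisors hd)
      simp only [hA, Finset.mem_Icc]
      omega
    have hdivsum : ∑ d ∈ (Nat.gcd a b).divisors, ((d:ℝ))⁻¹ ≤ M :=
      le_trans (Finset.sum_le_sum_of_subset_of_nonneg hdivsub
        (fun n _ _ => by positivity)) hharm
    have hden : (0:ℝ) < (a:ℝ)^3 * (b:ℝ)^2 := by
      have ha' : (0:ℝ) < (a:ℝ) := by exact_mod_cast ha1
      have hb' : (0:ℝ) < (b:ℝ) := by exact_mod_cast hb1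
      positivity
    have hterm : ∀ d ∈ (Nat.gcd a b).divisors,
        (d:ℝ) * (‖lam (a/d) 1‖ * ‖lam 1 (b/d)‖)^2 / ((a:ℝ)^3 * (b:ℝ)^2)
        = h3 d (a/d) (b/d) := by
      intro d hd
      have hda : d ∣ a := (Nat.dvd_of_mem_divisors hd).trans (Nat.gcd_dvd_left a b)
      have hdb : d ∣ b := (Nat.dvd_of_mem_divisors hd).trans (Nat.gcd_dvd_right a b)
      have hd1 : 0 < d := Nat.pos_of_mem_divisors hd
      have haa : (a:ℝ) = (d:ℝ) * ((a/d : ℕ):ℝ) := by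
        rw [← Nat.cast_mul]
        exact_mod_cast (Nat.mul_div_cancel' hda).symm
      have hbb : (b:ℝ) = (d:ℝ) * ((b/d : ℕ):ℝ) := by
        rw [← Nat.cast_mul]
        exact_mod_cast (Nat.mul_div_cancel' hdb).symm
      have hd' : (0:ℝ) < (d:ℝ) := by exact_mod_cast hd1
      have had' : (0:ℝ) < ((a/d : ℕ):ℝ) := by
        have : 1 ≤ a / d := Nat.one_le_div_iff hd1 |>.mpr (Nat.le_of_dvd (by omega) hda)
        exact_mod_cast this
      have hbd' : (0:ℝ) < ((b/d : ℕ):ℝ) := by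
        have : 1 ≤ b / d := Nat.one_le_div_iff hd1 |>.mpr (Nat.le_of_dvd (by omega) hdb)
        exact_mod_cast this
      rw [hh3]
      simp only
      rw [haa, hbb]
      field_simp
    calc ‖lam a b‖ ^ 2 / ((a:ℝ)^3 * (b:ℝ)^2)
        ≤ ((∑ d ∈ (Nat.gcd a b).divisors, ((d:ℝ))⁻¹)
            * ∑ d ∈ (Nat.gcd a b).divisors,
                (d:ℝ) * (‖lam (a/d) 1‖ * ‖lam 1 (b/d)‖)^2)
            / ((a:ℝ)^3 * (b:ℝ)^2) := by
          exact div_le_div_of_nonneg_right hcs hden.le |>.trans_eq rfl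
      _ ≤ (M * ∑ d ∈ (Nat.gcd a b).divisors,
                (d:ℝ) * (‖lam (a/d) 1‖ * ‖lam 1 (b/d)‖)^2)
            / ((a:ℝ)^3 * (b:ℝ)^2) := by
          apply div_le_div_of_nonneg_right _ hden.le
          apply mul_le_mul_of_nonneg_right hdivsum
          apply Finset.sum_nonneg
          intro d hd
          positivity
      _ = M * ∑ d ∈ (Nat.gcd a b).divisors, h3 d (a/d) (b/d) := by
          rw [mul_div_assoc, Finset.sum_div]
          congr 1
          exact Finset.sum_congr rfl hterm
  -- Step B : reindexing
  set T3 := (A ×ˢ A ×ˢ A).filter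
      (fun t : ℕ × ℕ × ℕ => X < (t.1:ℝ)^3 * (t.2.1:ℝ)^2 * (t.2.2:ℝ)) with hT3
  have stepB : ∑ p ∈ F, ∑ d ∈ (Nat.gcd p.1 p.2).divisors, h3 d (p.1/d) (p.2/d)
      ≤ ∑ t ∈ T3, h3 t.1 t.2.1 t.2.2 := by
    rw [Finset.sum_sigma' F (fun p => (Nat.gcd p.1 p.2).divisors)
      (fun p d => h3 d (p.1/d) (p.2/d))]
    set B := F.sigma (fun p => (Nat.gcd p.1 p.2).divisors) with hB
    set e : (Σ _ : ℕ × ℕ, ℕ) → ℕ × ℕ × ℕ := fun x => (x.2, x.1.1/x.2, x.1.2/x.2) with he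
    have hBfacts : ∀ x ∈ B, x.2 ∣ x.1.1 ∧ x.2 ∣ x.1.2 ∧ 0 < x.2 ∧ 1 ≤ x.1.1 ∧ x.1.1 ≤ N
        ∧ 1 ≤ x.1.2 ∧ x.1.2 ≤ N ∧ (X:ℝ) < ((x.1.1^2 * x.1.2 : ℕ):ℝ) := by
      rintro ⟨⟨a, b⟩, d⟩ hx
      rw [hB, Finset.mem_sigma] at hx
      obtain ⟨hpF, hd⟩ := hx
      simp only [hF, Finset.mem_filter, Finset.mem_product, hA, Finset.mem_Icc] at hpF
      obtain ⟨⟨⟨ha1, haN⟩, hb1, hbN⟩, hXlt, _⟩ := hpF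
      have hdg := Nat.dvd_of_mem_divisors hd
      exact ⟨hdg.trans (Nat.gcd_dvd_left a b), hdg.trans (Nat.gcd_dvd_right a b),
        Nat.pos_of_mem_divisors hd, ha1, haN, hb1, hbN, hXlt⟩
    have hinj : ∀ x ∈ B, ∀ y ∈ B, e x = e y → x = y := by
      rintro ⟨⟨a, b⟩, d⟩ hx ⟨⟨a', b'⟩, d'⟩ hy hxy
      obtain ⟨hda, hdb, hd0, -⟩ := hBfacts _ hx
      obtain ⟨hda', hdb', hd0', -⟩ := hBfacts _ hy
      simp only [he, Prod.mk.injEq] at hxy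
      obtain ⟨hd, hA1, hB1⟩ := hxy
      subst hd
      replace hda : d ∣ a := hda
      replace hdb : d ∣ b := hdb
      replace hda' : d ∣ a' := hda'
      replace hdb' : d ∣ b' := hdb'
      have ha : a = a' := by
        rw [← Nat.mul_div_cancel' hda, ← Nat.mul_div_cancel' hda', hA1]
      have hb : b = b' := by
        rw [← Nat.mul_div_cancel' hdb, ← Nat.mul_div_cancel' hdb', hB1]
      subst ha; subst hb; rfl
    have himg : ∑ x ∈ B, h3 x.2 (x.1.1/x.2) (x.1.2/x.2)
        = ∑ t ∈ B.image e, h3 t.1 t.2.1 t.2.2 := by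
      rw [Finset.sum_image hinj]
    rw [himg]
    apply Finset.sum_le_sum_of_subset_of_nonneg
    · intro t ht
      rw [Finset.mem_image] at ht
      obtain ⟨x, hx, rfl⟩ := ht
      obtain ⟨hda, hdb, hd0, ha1, haN, hb1, hbN, hXlt⟩ := hBfacts _ hx
      obtain ⟨⟨a, b⟩, d⟩ := x
      replace hda : d ∣ a := hda
      replace hdb : d ∣ b := hdb
      replace hd0 : 0 < d := hd0
      replace ha1 : 1 ≤ a := ha1
      replace haN : a ≤ N := haN
      replace hb1 : 1 ≤ b := hb1
      replace hbN : b ≤ N := hbN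
      replace hXlt : (X:ℝ) < ((a^2 * b : ℕ):ℝ) := hXlt
      have hdN : d ≤ N := le_trans (Nat.le_of_dvd (by omega) hda) haN
      have had1 : 1 ≤ a / d := (Nat.one_le_div_iff hd0).mpr (Nat.le_of_dvd (by omega) hda)
      have hbd1 : 1 ≤ b / d := (Nat.one_le_div_iff hd0).mpr (Nat.le_of_dvd (by omega) hdb)
      have hadN : a / d ≤ N := le_trans (Nat.div_le_self a d) haN
      have hbdN : b / d ≤ N := le_trans (Nat.div_le_self b d) hbN
      have hnat : d^3 * (a/d)^2 * (b/d) = a^2 * b := by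
        have h1 : d * (a/d) = a := Nat.mul_div_cancel' hda
        have h2 : d * (b/d) = b := Nat.mul_div_cancel' hdb
        calc d^3 * (a/d)^2 * (b/d) = (d * (a/d))^2 * (d * (b/d)) := by ring
          _ = a^2 * b := by rw [h1, h2]
      rw [hT3, Finset.mem_filter, Finset.mem_product, Finset.mem_product]
      refine ⟨⟨?_, ?_, ?_⟩, ?_⟩
      · rw [hA, Finset.mem_Icc]; exact ⟨hd0, hdN⟩
      · rw [hA, Finset.mem_Icc]; exact ⟨had1, hadN⟩
      · rw [hA, Finset.mem_Icc]; exact ⟨hbd1, hbdN⟩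
      · show X < ((d:ℕ):ℝ)^3 * (((a/d : ℕ)):ℝ)^2 * (((b/d : ℕ)):ℝ)
        calc X < ((a^2 * b : ℕ):ℝ) := hXlt
          _ = ((d^3 * (a/d)^2 * (b/d) : ℕ):ℝ) := by rw [hnat]
          _ = ((d:ℕ):ℝ)^3 * (((a/d : ℕ)):ℝ)^2 * (((b/d : ℕ)):ℝ) := by push_cast; ring
    · intro t _ _
      exact h3nonneg _ _ _
  -- Step C : evaluating the triple sum
  have stepC : ∑ t ∈ T3, h3 t.1 t.2.1 t.2.2 ≤ 7 * K^2 * M^2 / X := by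
    have hnest : ∑ t ∈ T3, h3 t.1 t.2.1 t.2.2
        = ∑ d ∈ A, ∑ a' ∈ A,
            ∑ b' ∈ A.filter (fun b' : ℕ => X / ((d:ℝ)^3 * (a':ℝ)^2) < (b':ℝ)), h3 d a' b' := by
      rw [hT3, Finset.sum_filter, Finset.sum_product]
      refine Finset.sum_congr rfl fun d hd => ?_
      rw [Finset.sum_product]
      refine Finset.sum_congr rfl fun a' ha' => ?_
      rw [Finset.sum_filter]
      refine Finset.sum_congr rfl fun b' _ => ?_
      have hd1 : 1 ≤ d := (Finset.mem_Icc.mp (by rwa [hA] at hd)).1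
      have ha1 : 1 ≤ a' := (Finset.mem_Icc.mp (by rwa [hA] at ha')).1
      have hpos : (0:ℝ) < (d:ℝ)^3 * (a':ℝ)^2 := by
        have : (0:ℝ) < (d:ℝ) := by exact_mod_cast hd1
        have : (0:ℝ) < (a':ℝ) := by exact_mod_cast ha1
        positivity
      apply if_congr _ rfl rfl
      rw [div_lt_iff₀ hpos]
      constructor <;> intro h <;> nlinarith
    rw [hnest]
    have inner2 : ∀ d ∈ A, ∀ a' ∈ A,
        ∑ b' ∈ A.filter (fun b' : ℕ => X / ((d:ℝ)^3 * (a':ℝ)^2) < (b':ℝ)), h3 d a' b'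
        ≤ 7 * K / X * ((d:ℝ))⁻¹ * (‖lam a' 1‖^2 / (a':ℝ)) := by
      intro d hd a' ha'
      have hd1 : 1 ≤ d := (Finset.mem_Icc.mp (by rwa [hA] at hd)).1
      have ha1 : 1 ≤ a' := (Finset.mem_Icc.mp (by rwa [hA] at ha')).1
      have hdr : (0:ℝ) < (d:ℝ) := by exact_mod_cast hd1
      have har : (0:ℝ) < (a':ℝ) := by exact_mod_cast ha1
      have hpos : (0:ℝ) < (d:ℝ)^3 * (a':ℝ)^2 := by positivity
      have hTpos : 0 < X / ((d:ℝ)^3 * (a':ℝ)^2) := by positivity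
      have htail := my_tail_bound (fun n => ‖lam 1 n‖^2)
        (fun n => by positivity) K hsum2 N (X / ((d:ℝ)^3 * (a':ℝ)^2)) hTpos
      calc ∑ b' ∈ A.filter (fun b' : ℕ => X / ((d:ℝ)^3 * (a':ℝ)^2) < (b':ℝ)), h3 d a' b'
          = ((d:ℝ)^4)⁻¹ * (‖lam a' 1‖^2 / (a':ℝ)^3)
            * ∑ b' ∈ A.filter (fun b' : ℕ => X / ((d:ℝ)^3 * (a':ℝ)^2) < (b':ℝ)),
                ‖lam 1 b'‖^2 / (b':ℝ)^2 := by
            rw [Finset.mul_sum]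
        _ ≤ ((d:ℝ)^4)⁻¹ * (‖lam a' 1‖^2 / (a':ℝ)^3)
            * (7 * K / (X / ((d:ℝ)^3 * (a':ℝ)^2))) := by
            apply mul_le_mul_of_nonneg_left _ (by positivity)
            rw [hA]
            exact htail
        _ = 7 * K / X * ((d:ℝ))⁻¹ * (‖lam a' 1‖^2 / (a':ℝ)) := by
            rw [div_div_eq_mul_div]
            field_simp
    calc ∑ d ∈ A, ∑ a' ∈ A,
            ∑ b' ∈ A.filter (fun b' : ℕ => X / ((d:ℝ)^3 * (a':ℝ)^2) < (b':ℝ)), h3 d a' b'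
        ≤ ∑ d ∈ A, ∑ a' ∈ A, 7 * K / X * ((d:ℝ))⁻¹ * (‖lam a' 1‖^2 / (a':ℝ)) := by
          refine Finset.sum_le_sum fun d hd => Finset.sum_le_sum fun a' ha' => ?_
          exact inner2 d hd a' ha'
      _ = ∑ d ∈ A, 7 * K / X * ((d:ℝ))⁻¹
            * ∑ a' ∈ A, ‖lam a' 1‖^2 / (a':ℝ) := by
          refine Finset.sum_congr rfl fun d _ => ?_
          rw [Finset.mul_sum]
      _ ≤ ∑ d ∈ A, 7 * K / X * ((d:ℝ))⁻¹ * (K * M) := by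
          refine Finset.sum_le_sum fun d _ => ?_
          apply mul_le_mul_of_nonneg_left _ (by positivity)
          exact my_div_linear (fun n => ‖lam n 1‖^2) (fun n => by positivity)
            K hsum1 N
      _ = 7 * K / X * (K * M) * ∑ d ∈ A, ((d:ℝ))⁻¹ := by
          rw [Finset.mul_sum]
          exact Finset.sum_congr rfl fun d _ => by ring
      _ ≤ 7 * K / X * (K * M) * M := by
          apply mul_le_mul_of_nonneg_left hharm (by positivity)
      _ = 7 * K^2 * M^2 / X := by ring
  -- assembling
  have hmain : ∑ p ∈ F, ‖lam p.1 p.2‖ ^ 2 / ((p.1 : ℝ) ^ 3 * (p.2 : ℝ) ^ 2)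
      ≤ 7 * K^2 * M^3 / X := by
    calc ∑ p ∈ F, ‖lam p.1 p.2‖ ^ 2 / ((p.1 : ℝ) ^ 3 * (p.2 : ℝ) ^ 2)
        ≤ ∑ p ∈ F, M * ∑ d ∈ (Nat.gcd p.1 p.2).divisors, h3 d (p.1/d) (p.2/d) :=
          Finset.sum_le_sum stepA
      _ = M * ∑ p ∈ F, ∑ d ∈ (Nat.gcd p.1 p.2).divisors, h3 d (p.1/d) (p.2/d) := by
          rw [Finset.mul_sum]
      _ ≤ M * ∑ t ∈ T3, h3 t.1 t.2.1 t.2.2 := mul_le_mul_of_nonneg_left stepB hM0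
      _ ≤ M * (7 * K^2 * M^2 / X) := mul_le_mul_of_nonneg_left stepC hM0
      _ = 7 * K^2 * M^3 / X := by ring
  -- final estimate : M ≤ c * X^(ε/3)
  have hlogX : (0:ℝ) ≤ Real.log X := Real.log_nonneg hX
  have hNle : ((N:ℝ)) + 1 ≤ 3 * X := by
    have h1 : (N:ℝ) ≤ 2 * X := Nat.floor_le (by linarith)
    linarith
  have hMle : M ≤ c * X ^ (ε/3 : ℝ) := by
    have hrp1 : (1:ℝ) ≤ X ^ (ε/3 : ℝ) := by
      have := Real.rpow_le_rpow_of_exponent_le hX (le_of_lt (by positivity : (0:ℝ) < ε/3))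
      rwa [Real.rpow_zero] at this
    have hlogle : Real.log X ≤ 3/ε * X ^ (ε/3 : ℝ) := by
      have h1 := Real.log_le_rpow_div hX0.le (by positivity : (0:ℝ) < ε/3)
      calc Real.log X ≤ X ^ (ε/3 : ℝ) / (ε/3) := h1
        _ = 3/ε * X ^ (ε/3 : ℝ) := by field_simp
    have h2 : M ≤ 1 + Real.log (3 * X) := by
      rw [hM]
      have : Real.log ((N:ℝ)+1) ≤ Real.log (3 * X) :=
        Real.log_le_log (by positivity) hNle
      linarith
    have h3' : Real.log (3 * X) = Real.log 3 + Real.log X :=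
      Real.log_mul (by norm_num) (by positivity)
    have h4 : 1 + Real.log 3 + Real.log X ≤ (1 + Real.log 3) * (1 + Real.log X) := by
      nlinarith
    have h5 : 1 + Real.log X ≤ (1 + 3/ε) * X ^ (ε/3 : ℝ) := by
      have : (1 + 3/ε) * X ^ (ε/3 : ℝ) = X ^ (ε/3 : ℝ) + 3/ε * X ^ (ε/3 : ℝ) := by ring
      rw [this]
      exact add_le_add hrp1 hlogle
    calc M ≤ 1 + Real.log (3 * X) := h2
      _ = 1 + Real.log 3 + Real.log X := by rw [h3']; ring
      _ ≤ (1 + Real.log 3) * (1 + Real.log X) := h4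
      _ ≤ (1 + Real.log 3) * ((1 + 3/ε) * X ^ (ε/3 : ℝ)) := by
          apply mul_le_mul_of_nonneg_left h5 (by linarith : (0:ℝ) ≤ 1 + Real.log 3)
      _ = c * X ^ (ε/3 : ℝ) := by rw [hc]; ring
  have hM3 : M^3 ≤ c^3 * X ^ (ε : ℝ) := by
    calc M^3 ≤ (c * X ^ (ε/3 : ℝ))^3 := pow_le_pow_left₀ hM0 hMle 3
      _ = c^3 * (X ^ (ε/3 : ℝ))^(3:ℕ) := by rw [mul_pow]
      _ = c^3 * X ^ (ε : ℝ) := by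
          rw [← Real.rpow_natCast (X ^ (ε/3 : ℝ)) 3, ← Real.rpow_mul hX0.le]
          norm_num
  have hfinal : 7 * K^2 * M^3 / X ≤ 7 * K^2 * c^3 * X ^ (-1 + ε : ℝ) := by
    have h1 : X ^ (-1 + ε : ℝ) = X ^ (ε : ℝ) / X := by
      rw [Real.rpow_add hX0, Real.rpow_neg_one]
      ring
    have h2 : 7 * K^2 * M^3 ≤ 7 * K^2 * c^3 * X ^ (ε : ℝ) := by
      calc 7 * K^2 * M^3 ≤ 7 * K^2 * (c^3 * X ^ (ε : ℝ)) := by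
            apply mul_le_mul_of_nonneg_left hM3 (by positivity)
        _ = 7 * K^2 * c^3 * X ^ (ε : ℝ) := by ring
    calc 7 * K^2 * M^3 / X ≤ (7 * K^2 * c^3 * X ^ (ε : ℝ)) / X :=
          div_le_div_of_nonneg_right h2 hX0.le
      _ = 7 * K^2 * c^3 * X ^ (-1 + ε : ℝ) := by rw [h1]; ring
  exact hmain.trans hfinal
end

section
/- There is an absolute constant C such that for every real Y ≥ 1, every positive integer d, every positive integer N, and all complex numbers a_1, …, a_N: Σ_{ψ mod d} ∫_{−Y}^{Y} |Σ_{n=1}^{N} a_n ψ(n) n^{iy}|² dy ≤ C·(dY + N)·Σ_{n=1}^{N} |a_n|², where the outer sum runs over all Dirichlet characters ψ modulo d. -/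
open MeasureTheory intervalIntegral Complex Finset

noncomputable def triK (L θ : ℝ) : ℝ :=
  if θ = 0 then L else 2 * (1 - Real.cos (L * θ)) / (L * θ ^ 2)


lemma abs_int (L : ℝ) (hL : 0 < L) : ∫ y in (-L)..L, (1 - |y| / L) = L := by
  have h1 : ∫ y in (-L)..(0:ℝ), (1 - |y| / L) = L / 2 := by
    have : ∀ y ∈ Set.uIcc (-L) (0:ℝ), (1 - |y| / L) = 1 - (-y) / L := by
      intro y hy
      rw [Set.uIcc_of_le (by linarith)] at hy
      rw [_root_.abs_of_nonpos hy.2]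
    rw [intervalIntegral.integral_congr this]
    have : (fun y : ℝ => 1 - -y / L) = (fun y : ℝ => 1 + (1/L) * y) := by
      funext y; ring
    rw [this]
    rw [intervalIntegral.integral_add (intervalIntegrable_const)
      ((intervalIntegral.intervalIntegrable_id).const_mul _),
      intervalIntegral.integral_const, intervalIntegral.integral_const_mul,
      integral_id]
    field_simp
    ring
  have h2 : ∫ y in (0:ℝ)..L, (1 - |y| / L) = L / 2 := by
    have : ∀ y ∈ Set.uIcc (0:ℝ) L, (1 - |y| / L) = 1 - (1/L) * y := by
      intro y hy
      rw [Set.uIcc_of_le (by linarith)] at hy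
      rw [_root_.abs_of_nonneg hy.1]; ring
    rw [intervalIntegral.integral_congr this]
    rw [intervalIntegral.integral_sub (intervalIntegrable_const)
      ((intervalIntegral.intervalIntegrable_id).const_mul _),
      intervalIntegral.integral_const, intervalIntegral.integral_const_mul,
      integral_id]
    field_simp
    ring
  rw [← intervalIntegral.integral_add_adjacent_intervals (a := -L) (b := 0) (c := L),
    h1, h2]
  · ring
  · apply Continuous.intervalIntegrable; fun_prop
  · apply Continuous.intervalIntegrable; fun_prop

lemma expDeriv (c : ℂ) (y : ℝ) :
    HasDerivAt (fun t : ℝ => Complex.exp (c * t)) (c * Complex.exp (c * y)) y := by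
  have h0 : HasDerivAt (fun t : ℝ => (t : ℂ)) 1 y := Complex.ofRealCLM.hasDerivAt
  have h1 : HasDerivAt (fun t : ℝ => c * (t : ℂ)) c y := by
    simpa using h0.const_mul c
  simpa [mul_comm] using h1.cexp

lemma lin_deriv (L : ℝ) (y : ℝ) :
    HasDerivAt (fun t : ℝ => (1 - (t : ℂ) / L)) (-(1 / (L : ℂ))) y := by
  have h0 : HasDerivAt (fun t : ℝ => (t : ℂ)) 1 y := Complex.ofRealCLM.hasDerivAt
  have h1 := (h0.div_const (L : ℂ)).const_sub 1
  simpa [one_div] using h1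

lemma lin_deriv' (L : ℝ) (y : ℝ) :
    HasDerivAt (fun t : ℝ => (1 + (t : ℂ) / L)) (1 / (L : ℂ)) y := by
  have h0 : HasDerivAt (fun t : ℝ => (t : ℂ)) 1 y := Complex.ofRealCLM.hasDerivAt
  have h1 := (h0.div_const (L : ℂ)).const_add 1
  simpa [one_div] using h1

lemma piece_right (L : ℝ) (hL : 0 < L) (c : ℂ) (hc0 : c ≠ 0) :
    ∫ y in (0:ℝ)..L, (1 - (y : ℂ) / L) * Complex.exp (c * y)
      = (Complex.exp (c * L) - 1) / (L * c ^ 2) - 1 / c := by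
  have hL0 : (L : ℂ) ≠ 0 := by exact_mod_cast (ne_of_gt hL)
  set H : ℝ → ℂ := fun y => (1 - (y : ℂ) / L) * Complex.exp (c * y) / c
      + (1 / L) * Complex.exp (c * y) / c ^ 2 with hH
  have hderiv : ∀ y ∈ Set.uIcc (0:ℝ) L,
      HasDerivAt H ((1 - (y : ℂ) / L) * Complex.exp (c * y)) y := by
    intro y _
    have h1 := ((lin_deriv L y).mul (expDeriv c y)).div_const c
    have h2 := ((expDeriv c y).const_mul ((1 : ℂ) / L)).div_const (c ^ 2)
    have := h1.add h2
    convert this using 1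
    · rfl
    · rfl
    field_simp
    ring
  have hcont : IntervalIntegrable (fun y : ℝ => (1 - (y : ℂ) / L) * Complex.exp (c * y))
      MeasureTheory.volume 0 L := by
    apply Continuous.intervalIntegrable; fun_prop
  rw [intervalIntegral.integral_eq_sub_of_hasDerivAt hderiv hcont]
  simp only [hH, Complex.ofReal_zero, Complex.ofReal_one, mul_zero, Complex.exp_zero]
  rw [div_self hL0]
  ring

lemma piece_left (L : ℝ) (hL : 0 < L) (c : ℂ) (hc0 : c ≠ 0) :
    ∫ y in (-L)..(0:ℝ), (1 + (y : ℂ) / L) * Complex.exp (c * y)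
      = 1 / c - (1 - Complex.exp (c * (-L))) / (L * c ^ 2) := by
  have hL0 : (L : ℂ) ≠ 0 := by exact_mod_cast (ne_of_gt hL)
  set H : ℝ → ℂ := fun y => (1 + (y : ℂ) / L) * Complex.exp (c * y) / c
      - (1 / L) * Complex.exp (c * y) / c ^ 2 with hH
  have hderiv : ∀ y ∈ Set.uIcc (-L) (0:ℝ),
      HasDerivAt H ((1 + (y : ℂ) / L) * Complex.exp (c * y)) y := by
    intro y _
    have h1 := ((lin_deriv' L y).mul (expDeriv c y)).div_const c
    have h2 := ((expDeriv c y).const_mul ((1 : ℂ) / L)).div_const (c ^ 2)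
    have := h1.sub h2
    convert this using 1
    · rfl
    · rfl
    field_simp
    ring
  have hcont : IntervalIntegrable (fun y : ℝ => (1 + (y : ℂ) / L) * Complex.exp (c * y))
      MeasureTheory.volume (-L) 0 := by
    apply Continuous.intervalIntegrable; fun_prop
  rw [intervalIntegral.integral_eq_sub_of_hasDerivAt hderiv hcont]
  simp only [hH, Complex.ofReal_zero, Complex.ofReal_one, mul_zero, Complex.exp_zero,
    Complex.ofReal_neg]
  rw [neg_div, div_self hL0]
  ring

lemma triK_integral (L : ℝ) (hL : 0 < L) (θ : ℝ) :
    ∫ y in (-L)..L, ((1 - |y| / L : ℝ) : ℂ) * Complex.exp (Complex.I * y * θ)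
      = (triK L θ : ℂ) := by
  rcases eq_or_ne θ 0 with h0 | h0
  · subst h0
    simp only [Complex.ofReal_zero, mul_zero, Complex.exp_zero, mul_one]
    rw [intervalIntegral.integral_ofReal, abs_int L hL, triK]
    simp
  · set c : ℂ := Complex.I * (θ : ℂ) with hc
    have hc0 : c ≠ 0 := by
      simp [hc, Complex.I_ne_zero, Complex.ofReal_eq_zero, h0]
    have hL0 : (L : ℂ) ≠ 0 := by exact_mod_cast (ne_of_gt hL)
    have hθ0 : (θ : ℂ) ≠ 0 := by exact_mod_cast h0
    have e1 : ∫ y in (-L)..(0:ℝ), ((1 - |y| / L : ℝ) : ℂ) * Complex.exp (Complex.I * y * θ)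
        = 1 / c - (1 - Complex.exp (c * (-L))) / (L * c ^ 2) := by
      rw [← piece_left L hL c hc0]
      apply intervalIntegral.integral_congr
      intro y hy
      rw [Set.uIcc_of_le (by linarith)] at hy
      have harg : Complex.I * (y:ℂ) * (θ:ℂ) = c * (y:ℂ) := by rw [hc]; ring
      simp only [harg, _root_.abs_of_nonpos hy.2]
      push_cast
      ring
    have e2 : ∫ y in (0:ℝ)..L, ((1 - |y| / L : ℝ) : ℂ) * Complex.exp (Complex.I * y * θ)
        = (Complex.exp (c * L) - 1) / (L * c ^ 2) - 1 / c := by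
      rw [← piece_right L hL c hc0]
      apply intervalIntegral.integral_congr
      intro y hy
      rw [Set.uIcc_of_le (by linarith)] at hy
      have harg : Complex.I * (y:ℂ) * (θ:ℂ) = c * (y:ℂ) := by rw [hc]; ring
      simp only [harg, _root_.abs_of_nonneg hy.1]
      push_cast
      ring
    rw [← intervalIntegral.integral_add_adjacent_intervals (a := -L) (b := 0) (c := L)
      (by apply Continuous.intervalIntegrable; fun_prop)
      (by apply Continuous.intervalIntegrable; fun_prop), e1, e2]
    have hcos : 2 * Complex.cos ((L : ℂ) * θ)
        = Complex.exp (c * L) + Complex.exp (c * (-L)) := by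
      rw [Complex.two_cos]
      congr 2 <;> rw [hc] <;> push_cast <;> ring
    rw [triK, if_neg h0]
    have : ((2 * (1 - Real.cos (L * θ)) / (L * θ ^ 2) : ℝ) : ℂ)
        = 2 * (1 - Complex.cos ((L:ℂ) * θ)) / ((L:ℂ) * (θ:ℂ) ^ 2) := by
      push_cast [Complex.ofReal_cos]
      ring
    rw [this]
    have hc2 : c ^ 2 = -((θ:ℂ)^2) := by
      rw [hc, mul_pow, Complex.I_sq]; ring
    rw [show (1 / c - (1 - Complex.exp (c * (-L))) / (L * c ^ 2))
        + ((Complex.exp (c * L) - 1) / (L * c ^ 2) - 1 / c)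
        = (Complex.exp (c * (L:ℂ)) + Complex.exp (c * -(L:ℂ)) - 2) / ((L:ℂ) * c ^ 2) from by
      push_cast; ring]
    rw [← hcos, hc2, mul_neg, div_neg]
    push_cast
    ring

lemma triK_nonneg {L : ℝ} (hL : 0 < L) (θ : ℝ) : 0 ≤ triK L θ := by
  unfold triK
  split_ifs with h
  · exact hL.le
  · apply div_nonneg
    · have := Real.cos_le_one (L * θ); linarith
    · positivity

lemma triK_neg (L θ : ℝ) : triK L (-θ) = triK L θ := by
  unfold triK
  rcases eq_or_ne θ 0 with h | h
  · simp [h]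
  · rw [if_neg (by simpa using h), if_neg h, mul_neg, Real.cos_neg, neg_pow]
    ring

lemma triK_le_L {L : ℝ} (hL : 0 < L) (θ : ℝ) : triK L θ ≤ L := by
  unfold triK
  split_ifs with h
  · exact le_refl L
  · rw [div_le_iff₀ (by positivity)]
    have := Real.one_sub_sq_div_two_le_cos (x := L * θ)
    nlinarith [sq_nonneg (L * θ)]

lemma triK_le_inv' {L δ : ℝ} (hL : 0 < L) {θ : ℝ} (hδ : 0 < δ) (h : δ ≤ |θ|) :
    triK L θ ≤ 4 / (L * δ ^ 2) := by
  have hθ : θ ≠ 0 := by intro h0; rw [h0] at h; simp at h; linarith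
  have h1 : triK L θ ≤ 4 / (L * θ ^ 2) := by
    rw [triK, if_neg hθ]
    have hcos : 1 - Real.cos (L * θ) ≤ 2 := by
      have := Real.neg_one_le_cos (L * θ); linarith
    rw [div_le_div_iff₀ (by positivity) (by positivity)]
    have hp : 0 < L * θ ^ 2 := by positivity
    nlinarith
  refine h1.trans ?_
  apply div_le_div_of_nonneg_left (by norm_num) (by positivity)
  have : δ ^ 2 ≤ θ ^ 2 := by
    rw [← _root_.sq_abs θ]; exact pow_le_pow_left₀ hδ.le h 2
  nlinarith

lemma log_gap' {m n N : ℕ} (hm1 : 1 ≤ m) (hmN : m ≤ N) (hn1 : 1 ≤ n) (hnN : n ≤ N)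
    (hnm : n ≤ m) :
    ((m:ℝ) - n) / N ≤ Real.log m - Real.log n := by
  have hNpos : (0:ℝ) < N := by exact_mod_cast Nat.lt_of_lt_of_le (by omega) hmN
  have hmpos : (0:ℝ) < m := by exact_mod_cast hm1
  have hnpos : (0:ℝ) < n := by exact_mod_cast hn1
  have h1 : Real.log ((n:ℝ) / m) ≤ (n:ℝ)/m - 1 :=
    Real.log_le_sub_one_of_pos (by positivity)
  rw [Real.log_div (by positivity) (by positivity)] at h1
  have h2 : ((m:ℝ) - n) / m ≤ Real.log m - Real.log n := by
    have : (n:ℝ)/m - 1 = -(((m:ℝ) - n)/m) := by field_simp; ring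
    rw [this] at h1
    linarith
  refine le_trans ?_ h2
  apply div_le_div_of_nonneg_left ?_ hmpos ?_
  · have : (n:ℝ) ≤ m := by exact_mod_cast hnm
    linarith
  · exact_mod_cast hmN

lemma local_sum_bound (Y : ℝ) (hY : 1 ≤ Y) (d : ℕ) [NeZero d] (N m : ℕ)
    (hm : m ∈ Finset.Icc 1 N) :
    ∑ n ∈ (Finset.Icc 1 N).filter (fun n : ℕ => (n : ZMod d) = (m : ZMod d)),
        triK (2*Y) (Real.log m - Real.log n) ≤ 12 * (Y + (N:ℝ) / d) := by
  simp only [Finset.mem_Icc] at hm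
  obtain ⟨hm1, hmN⟩ := hm
  have hdpos : 0 < d := Nat.pos_of_ne_zero (NeZero.ne d)
  have hdR : (0:ℝ) < d := by exact_mod_cast hdpos
  have hNpos : 0 < N := le_trans hm1 hmN
  have hNR : (0:ℝ) < N := by exact_mod_cast hNpos
  have hYpos : (0:ℝ) < Y := by linarith
  have hL : (0:ℝ) < 2*Y := by linarith
  set s : Finset ℕ := (Finset.Icc 1 N).filter (fun n : ℕ => (n : ZMod d) = (m : ZMod d))
    with hs
  have hms : m ∈ s := by
    simp [hs, Finset.mem_filter, Finset.mem_Icc, hm1, hmN]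
  set f : ℕ → ℝ := fun n => triK (2*Y) (Real.log m - Real.log n) with hf
  have hfm : f m = 2*Y := by simp [hf, triK]
  set M : ℕ := N / d with hM
  set jf : ℕ → ℕ := fun n => (max m n - min m n) / d with hjf
  have hkey : ∀ n ∈ s.erase m, (max m n - min m n) = jf n * d ∧ 1 ≤ jf n ∧ jf n ≤ M
      ∧ 1 ≤ n ∧ n ≤ N := by
    intro n hn
    rw [Finset.mem_erase] at hn
    obtain ⟨hne, hns⟩ := hn
    rw [hs, Finset.mem_filter, Finset.mem_Icc] at hns
    obtain ⟨⟨hn1, hnN⟩, hcong⟩ := hns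
    have hmod : n ≡ m [MOD d] := (ZMod.natCast_eq_natCast_iff _ _ _).mp hcong
    have hdvd : d ∣ (max m n - min m n) := by
      rcases le_total m n with h | h
      · rw [max_eq_right h, min_eq_left h]
        exact (Nat.modEq_iff_dvd' h).mp hmod.symm
      · rw [max_eq_left h, min_eq_right h]
        exact (Nat.modEq_iff_dvd' h).mp hmod
    refine ⟨(Nat.div_mul_cancel hdvd).symm, ?_, ?_, hn1, hnN⟩
    · rw [hjf]
      exact Nat.one_le_div_iff hdpos |>.mpr (Nat.le_of_dvd (by omega) hdvd)
    · rw [hjf, hM]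
      apply Nat.div_le_div_right
      omega
  set B : ℕ → ℝ := fun j => min (2*Y) (2*(N:ℝ)^2/(Y*(j:ℝ)^2*(d:ℝ)^2)) with hB
  have hBnonneg : ∀ j : ℕ, 0 ≤ B j := by
    intro j
    rcases Nat.eq_zero_or_pos j with h | h
    · simp [hB, h]; positivity
    · have : (0:ℝ) < j := by exact_mod_cast h
      apply le_min (by linarith) (by positivity)
  have hfB : ∀ n ∈ s.erase m, f n ≤ B (jf n) := by
    intro n hn
    obtain ⟨hdiff, hj1, hjM, hn1, hnN⟩ := hkey n hn
    have hjR : (0:ℝ) < jf n := by exact_mod_cast hj1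
    refine le_min (triK_le_L hL _) ?_
    have hδ : (0:ℝ) < (jf n : ℝ) * d / N := by positivity
    have hcast : ((max m n - min m n : ℕ) : ℝ) = (jf n : ℝ) * d := by
      rw [hdiff]; push_cast; ring
    have hgap : (jf n : ℝ) * d / N ≤ |Real.log m - Real.log n| := by
      rcases le_total n m with h | h
      · have h2 := log_gap' hm1 hmN hn1 hnN h
        have h3 : ((max m n - min m n : ℕ) : ℝ) = (m:ℝ) - n := by
          rw [max_eq_left h, min_eq_right h, Nat.cast_sub h]
        rw [← hcast, h3]
        exact h2.trans (le_abs_self _)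
      · have h2 := log_gap' hn1 hnN hm1 hmN h
        have h3 : ((max m n - min m n : ℕ) : ℝ) = (n:ℝ) - m := by
          rw [max_eq_right h, min_eq_left h, Nat.cast_sub h]
        rw [← hcast, h3, abs_sub_comm]
        exact h2.trans (le_abs_self _)
    have h4 := triK_le_inv' hL hδ hgap
    refine h4.trans (le_of_eq ?_)
    field_simp
    ring
  -- fiberwise decomposition
  have hmaps : ∀ n ∈ s.erase m, jf n ∈ Finset.Icc 1 M := by
    intro n hn
    obtain ⟨_, h1, h2, _, _⟩ := hkey n hn
    exact Finset.mem_Icc.mpr ⟨h1, h2⟩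
  have hfiber : ∑ n ∈ s.erase m, f n
      = ∑ j ∈ Finset.Icc 1 M, ∑ n ∈ (s.erase m).filter (fun n => jf n = j), f n :=
    (Finset.sum_fiberwise_of_maps_to hmaps f).symm
  -- each fiber has at most 2 elements
  have hcard : ∀ j ∈ Finset.Icc 1 M, ((s.erase m).filter (fun n => jf n = j)).card ≤ 2 := by
    intro j hj
    have hsub : (s.erase m).filter (fun n => jf n = j) ⊆ {m + j * d, m - j * d} := by
      intro n hn
      rw [Finset.mem_filter] at hn
      obtain ⟨hne, hjn⟩ := hn
      obtain ⟨hdiff, _, _, _, _⟩ := hkey n hne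
      rw [hjn] at hdiff
      simp only [Finset.mem_insert, Finset.mem_singleton]
      rcases le_total m n with h | h
      · left; rw [max_eq_right h, min_eq_left h] at hdiff; omega
      · right; rw [max_eq_left h, min_eq_right h] at hdiff; omega
    calc ((s.erase m).filter (fun n => jf n = j)).card
        ≤ ({m + j * d, m - j * d} : Finset ℕ).card := Finset.card_le_card hsub
      _ ≤ 2 := Finset.card_insert_le _ _ |>.trans (by simp)
  -- sum over each fiber
  have hfibsum : ∀ j ∈ Finset.Icc 1 M,
      ∑ n ∈ (s.erase m).filter (fun n => jf n = j), f n ≤ 2 * B j := by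
    intro j hj
    have h1 : ∀ n ∈ (s.erase m).filter (fun n => jf n = j), f n ≤ B j := by
      intro n hn
      rw [Finset.mem_filter] at hn
      have := hfB n hn.1
      rwa [hn.2] at this
    calc ∑ n ∈ (s.erase m).filter (fun n => jf n = j), f n
        ≤ ((s.erase m).filter (fun n => jf n = j)).card • B j :=
          Finset.sum_le_card_nsmul _ _ _ h1
      _ = (((s.erase m).filter (fun n => jf n = j)).card : ℝ) * B j := by
          rw [nsmul_eq_mul]
      _ ≤ 2 * B j := by
          apply mul_le_mul_of_nonneg_right _ (hBnonneg j)
          exact_mod_cast hcard j hj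
  -- the B-sum estimate
  set K0 : ℕ := Nat.ceil ((N:ℝ) / (Y * d)) with hK0
  have hA : (0:ℝ) < (N:ℝ) / (Y * d) := by positivity
  have hAK0 : (N:ℝ) / (Y * d) ≤ K0 := Nat.le_ceil _
  have hK0A : (K0 : ℝ) < (N:ℝ) / (Y * d) + 1 := Nat.ceil_lt_add_one hA.le
  have hBsum : ∑ j ∈ Finset.Icc 1 M, B j ≤ 2*Y + 6 * ((N:ℝ) / d) := by
    rw [← Finset.sum_filter_add_sum_filter_not (Finset.Icc 1 M) (fun j => j ≤ K0)]
    have hpart1 : ∑ j ∈ (Finset.Icc 1 M).filter (fun j => j ≤ K0), B j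
        ≤ (K0 : ℝ) * (2*Y) := by
      calc ∑ j ∈ (Finset.Icc 1 M).filter (fun j => j ≤ K0), B j
          ≤ ∑ _j ∈ (Finset.Icc 1 M).filter (fun j => j ≤ K0), (2*Y) :=
            Finset.sum_le_sum (fun j _ => min_le_left _ _)
        _ = (((Finset.Icc 1 M).filter (fun j => j ≤ K0)).card : ℝ) * (2*Y) := by
            rw [Finset.sum_const, nsmul_eq_mul]
        _ ≤ (K0 : ℝ) * (2*Y) := by
            apply mul_le_mul_of_nonneg_right _ (by linarith)
            have hsub : (Finset.Icc 1 M).filter (fun j => j ≤ K0) ⊆ Finset.Icc 1 K0 := by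
              intro j hj
              rw [Finset.mem_filter, Finset.mem_Icc] at hj
              exact Finset.mem_Icc.mpr ⟨hj.1.1, hj.2⟩
            have := Finset.card_le_card hsub
            rw [Nat.card_Icc] at this
            exact_mod_cast this.trans (by omega)
    have hpart2 : ∑ j ∈ (Finset.Icc 1 M).filter (fun j => ¬ j ≤ K0), B j
        ≤ (2*(N:ℝ)^2/(Y*(d:ℝ)^2)) * (2 / ((K0:ℝ) + 1)) := by
      calc ∑ j ∈ (Finset.Icc 1 M).filter (fun j => ¬ j ≤ K0), B j
          ≤ ∑ j ∈ (Finset.Icc 1 M).filter (fun j => ¬ j ≤ K0),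
              (2*(N:ℝ)^2/(Y*(d:ℝ)^2)) * (((j:ℝ))^2)⁻¹ := by
            apply Finset.sum_le_sum
            intro j hj
            refine (min_le_right _ _).trans (le_of_eq ?_)
            rw [Finset.mem_filter, Finset.mem_Icc] at hj
            have : (0:ℝ) < j := by exact_mod_cast hj.1.1
            field_simp
        _ ≤ ∑ j ∈ Finset.Ioo K0 (M+1), (2*(N:ℝ)^2/(Y*(d:ℝ)^2)) * (((j:ℝ))^2)⁻¹ := by
            apply Finset.sum_le_sum_of_subset_of_nonneg
            · intro j hj
              rw [Finset.mem_filter, Finset.mem_Icc] at hj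
              rw [Finset.mem_Ioo]
              omega
            · intro j _ _
              positivity
        _ = (2*(N:ℝ)^2/(Y*(d:ℝ)^2)) * ∑ j ∈ Finset.Ioo K0 (M+1), (((j:ℝ))^2)⁻¹ := by
            rw [Finset.mul_sum]
        _ ≤ (2*(N:ℝ)^2/(Y*(d:ℝ)^2)) * (2 / ((K0:ℝ) + 1)) := by
            apply mul_le_mul_of_nonneg_left _ (by positivity)
            have h3 := sum_Ioo_inv_sq_le (α := ℝ) K0 (M+1)
            push_cast at h3 ⊢
            exact h3
    have hK0Ypos : (0:ℝ) ≤ K0 := Nat.cast_nonneg K0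
    have h1 : (K0:ℝ) * (2*Y) ≤ ((N:ℝ)/(Y*d) + 1) * (2*Y) := by
      apply mul_le_mul_of_nonneg_right (by linarith) (by linarith)
    have h2 : (2*(N:ℝ)^2/(Y*(d:ℝ)^2)) * (2 / ((K0:ℝ) + 1))
        ≤ (2*(N:ℝ)^2/(Y*(d:ℝ)^2)) * (2 / ((N:ℝ)/(Y*d))) := by
      apply mul_le_mul_of_nonneg_left _ (by positivity)
      apply div_le_div_of_nonneg_left (by norm_num) hA
      linarith
    have he1 : ((N:ℝ)/(Y*d) + 1) * (2*Y) = 2*((N:ℝ)/d) + 2*Y := by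
      field_simp
    have he2 : (2*(N:ℝ)^2/(Y*(d:ℝ)^2)) * (2 / ((N:ℝ)/(Y*d))) = 4*((N:ℝ)/d) := by
      field_simp
      ring
    rw [he1] at h1
    rw [he2] at h2
    refine le_trans (add_le_add (hpart1.trans h1) (hpart2.trans h2)) (by linarith)
  -- put everything together
  have htotal : ∑ n ∈ s, f n = f m + ∑ n ∈ s.erase m, f n := by
    rw [← Finset.sum_erase_add s f hms]
    ring
  rw [htotal, hfm, hfiber]
  have hsum2 : ∑ j ∈ Finset.Icc 1 M, ∑ n ∈ (s.erase m).filter (fun n => jf n = j), f n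
      ≤ ∑ j ∈ Finset.Icc 1 M, 2 * B j := Finset.sum_le_sum hfibsum
  have h5 : ∑ j ∈ Finset.Icc 1 M, 2 * B j = 2 * ∑ j ∈ Finset.Icc 1 M, B j := by
    rw [Finset.mul_sum]
  rw [h5] at hsum2
  have h6 : 2 * ∑ j ∈ Finset.Icc 1 M, B j ≤ 2 * (2*Y + 6 * ((N:ℝ) / d)) := by linarith
  have hfinal := hsum2.trans h6
  have hNd : (0:ℝ) ≤ (N:ℝ)/d := by positivity
  refine le_trans (add_le_add_right hfinal _) ?_
  linarith

lemma char_sum_bound (d : ℕ) [NeZero d] (m n : ℕ) :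
    ‖∑ ψ : DirichletCharacter ℂ d, ψ (m : ZMod d) * (starRingEnd ℂ) (ψ (n : ZMod d))‖
      ≤ if (m : ZMod d) = (n : ZMod d) then (d : ℝ) else 0 := by
  by_cases hn : IsUnit ((n : ZMod d))
  · have hconj : ∀ ψ : DirichletCharacter ℂ d,
        (starRingEnd ℂ) (ψ (n : ZMod d)) = ψ ((n : ZMod d)⁻¹) := by
      intro ψ
      have h1 : ψ ((n : ZMod d)⁻¹) * ψ (n : ZMod d) = 1 := by
        rw [← map_mul, ZMod.inv_mul_of_unit _ hn, map_one]
      have hnorm : ‖ψ (n : ZMod d)‖ = 1 := by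
        have := ψ.unit_norm_eq_one hn.unit
        rwa [IsUnit.unit_spec] at this
      rw [← Complex.inv_eq_conj hnorm]
      exact (eq_inv_of_mul_eq_one_left h1).symm
    simp only [hconj]
    have horth := DirichletCharacter.sum_char_inv_mul_char_eq ℂ (a := (n : ZMod d)) hn
      ((m : ZMod d))
    have hcomm : ∑ ψ : DirichletCharacter ℂ d, ψ (m : ZMod d) * ψ ((n : ZMod d)⁻¹)
        = ∑ ψ : DirichletCharacter ℂ d, ψ ((n : ZMod d)⁻¹) * ψ (m : ZMod d) := by
      simp [mul_comm]
    rw [hcomm, horth]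
    split_ifs with h1 h2 h2
    · simp only [norm_natCast]
      exact_mod_cast Nat.totient_le d
    · exact absurd h1.symm h2
    · exact absurd h2.symm h1
    · simp
  · have : ∀ ψ : DirichletCharacter ℂ d, ψ (n : ZMod d) = 0 :=
      fun ψ => ψ.map_nonunit hn
    simp only [this, map_zero, mul_zero, Finset.sum_const_zero, norm_zero]
    split_ifs <;> [exact Nat.cast_nonneg d; exact le_refl 0]

-- expansion of the smoothed integral for a fixed vector of coefficients b
lemma expand_integral (L : ℝ) (hL : 0 < L) (N : ℕ) (b : ℕ → ℂ) :
    ∫ y in (-L)..L, 2*(1-|y|/L) * ‖∑ n ∈ Finset.Icc 1 N,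
        b n * Complex.exp (Complex.I * y * Real.log n)‖^2
      = (∑ m ∈ Finset.Icc 1 N, ∑ n ∈ Finset.Icc 1 N,
          b m * (starRingEnd ℂ) (b n) * (2 * (triK L (Real.log m - Real.log n) : ℂ))).re := by
  set s := Finset.Icc 1 N with hs
  set F : ℝ → ℂ := fun y => ∑ n ∈ s, b n * Complex.exp (Complex.I * y * Real.log n) with hF
  set G : ℕ → ℕ → ℝ → ℂ := fun m n y =>
      b m * (starRingEnd ℂ) (b n) * (((2*(1-|y|/L) : ℝ)):ℂ)
        * Complex.exp (Complex.I * y * ((Real.log m - Real.log n : ℝ) : ℂ)) with hG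
  have hpoint : ∀ y : ℝ, 2*(1-|y|/L) * ‖F y‖^2 = (∑ m ∈ s, ∑ n ∈ s, G m n y).re := by
    intro y
    have h1 : F y * (starRingEnd ℂ) (F y) = ∑ m ∈ s, ∑ n ∈ s,
        (b m * Complex.exp (Complex.I * y * Real.log m))
          * (starRingEnd ℂ) (b n * Complex.exp (Complex.I * y * Real.log n)) := by
      rw [hF, map_sum, Finset.sum_mul_sum]
    have h2 : ∑ m ∈ s, ∑ n ∈ s, G m n y
        = (((2*(1-|y|/L) : ℝ)):ℂ) * (F y * (starRingEnd ℂ) (F y)) := by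
      rw [h1, Finset.mul_sum]
      apply Finset.sum_congr rfl
      intro m _
      rw [Finset.mul_sum]
      apply Finset.sum_congr rfl
      intro n _
      simp only [hG]
      rw [show Complex.I * (y:ℂ) * ((Real.log m - Real.log n : ℝ) : ℂ)
          = (Complex.I * (y:ℂ) * (Real.log m : ℂ)) + (-Complex.I * (y:ℂ) * (Real.log n : ℂ))
          by push_cast; ring]
      rw [Complex.exp_add]
      simp only [map_mul, ← Complex.exp_conj, Complex.conj_I, Complex.conj_ofReal]
      ring
    rw [h2]
    have h3 : F y * (starRingEnd ℂ) (F y) = ((‖F y‖^2 : ℝ) : ℂ) := by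
      rw [Complex.mul_conj, Complex.normSq_eq_norm_sq]
    rw [h3, ← Complex.ofReal_mul, Complex.ofReal_re]
  have hcont : ∀ m ∈ s, ∀ n ∈ s, Continuous (G m n) := by
    intro m _ n _
    rw [hG]
    fun_prop
  calc ∫ y in (-L)..L, 2*(1-|y|/L) * ‖F y‖^2
      = ∫ y in (-L)..L, (∑ m ∈ s, ∑ n ∈ s, G m n y).re := by
        apply intervalIntegral.integral_congr
        intro y _
        exact hpoint y
    _ = (∫ y in (-L)..L, ∑ m ∈ s, ∑ n ∈ s, G m n y).re := by
        have hInt : IntervalIntegrable (fun y => ∑ m ∈ s, ∑ n ∈ s, G m n y)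
            MeasureTheory.volume (-L) L := by
          apply Continuous.intervalIntegrable
          apply continuous_finset_sum
          intro m hm
          exact continuous_finset_sum _ (fun n hn => hcont m hm n hn)
        have := Complex.reCLM.intervalIntegral_comp_comm hInt
        simpa using this
    _ = (∑ m ∈ s, ∑ n ∈ s, ∫ y in (-L)..L, G m n y).re := by
        congr 1
        rw [intervalIntegral.integral_finset_sum]
        · apply Finset.sum_congr rfl
          intro m hm
          rw [intervalIntegral.integral_finset_sum]
          intro n hn
          exact (hcont m hm n hn).intervalIntegrable _ _
        · intro m hm
          apply Continuous.intervalIntegrable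
          exact continuous_finset_sum _ (fun n hn => hcont m hm n hn)
    _ = (∑ m ∈ s, ∑ n ∈ s,
          b m * (starRingEnd ℂ) (b n) * (2 * (triK L (Real.log m - Real.log n) : ℂ))).re := by
        congr 1
        apply Finset.sum_congr rfl
        intro m _
        apply Finset.sum_congr rfl
        intro n _
        have : ∫ y in (-L)..L, G m n y
            = b m * (starRingEnd ℂ) (b n)
              * ∫ y in (-L)..L, (((2*(1-|y|/L) : ℝ)):ℂ)
                  * Complex.exp (Complex.I * y * ((Real.log m - Real.log n : ℝ) : ℂ)) := by
          rw [← intervalIntegral.integral_const_mul]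
          apply intervalIntegral.integral_congr
          intro y _
          simp only [hG]; ring
        rw [this]
        congr 1
        have h2 : ∀ y : ℝ, (((2*(1-|y|/L) : ℝ)):ℂ)
              * Complex.exp (Complex.I * y * ((Real.log m - Real.log n : ℝ) : ℂ))
            = 2 * (((1-|y|/L : ℝ) : ℂ)
              * Complex.exp (Complex.I * y * ((Real.log m - Real.log n : ℝ) : ℂ))) := by
          intro y
          rw [Complex.ofReal_mul, Complex.ofReal_ofNat]
          ring
        rw [intervalIntegral.integral_congr (fun y _ => h2 y),
          intervalIntegral.integral_const_mul, triK_integral L hL]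

/-- Gallagher's hybrid large sieve inequality: there is an absolute constant `C`
such that for all `Y ≥ 1`, all positive moduli `d`, all `N` and all complex
coefficients `a_n`,
`Σ_{ψ mod d} ∫_{-Y}^{Y} |Σ_{n ≤ N} a_n ψ(n) n^{iy}|² dy ≤ C (dY + N) Σ_{n ≤ N} |a_n|²`. -/
theorem hybrid_large_sieve :
    ∃ C : ℝ, ∀ (Y : ℝ), 1 ≤ Y → ∀ (d : ℕ) [NeZero d], ∀ (N : ℕ) (a : ℕ → ℂ),
      ∑ ψ : DirichletCharacter ℂ d,
        ∫ y in (-Y)..Y,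
          ‖∑ n ∈ Finset.Icc 1 N,
              a n * ψ (n : ZMod d) * Complex.exp (Complex.I * y * Real.log n)‖ ^ 2
      ≤ C * ((d : ℝ) * Y + N) * ∑ n ∈ Finset.Icc 1 N, ‖a n‖ ^ 2 := by
  use 24
  intro Y hY d _ N a
  have hYpos : (0:ℝ) < Y := by linarith
  have hL : (0:ℝ) < 2*Y := by linarith
  have hdpos : 0 < d := Nat.pos_of_ne_zero (NeZero.ne d)
  have hdR : (0:ℝ) < d := by exact_mod_cast hdpos
  set s := Finset.Icc 1 N with hs
  set b : DirichletCharacter ℂ d → ℕ → ℂ := fun ψ n => a n * ψ (n : ZMod d) with hb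
  set F : DirichletCharacter ℂ d → ℝ → ℂ := fun ψ y =>
    ∑ n ∈ s, b ψ n * Complex.exp (Complex.I * y * Real.log n) with hF
  have hFcont : ∀ ψ, Continuous (F ψ) := by
    intro ψ
    apply continuous_finset_sum
    intro n _
    fun_prop
  -- Step 1 : compare with the smoothed integral
  have step1 : ∀ ψ, ∫ y in (-Y)..Y, ‖F ψ y‖^2
      ≤ ∫ y in (-(2*Y))..(2*Y), 2*(1-|y|/(2*Y)) * ‖F ψ y‖^2 := by
    intro ψ
    have hcont2 : Continuous fun y => ‖F ψ y‖^2 := by fun_prop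
    have hcont3 : Continuous fun y => 2*(1-|y|/(2*Y)) * ‖F ψ y‖^2 := by fun_prop
    have hnn : ∀ y : ℝ, y ∈ Set.Icc (-(2*Y)) (2*Y) → 0 ≤ 2*(1-|y|/(2*Y)) * ‖F ψ y‖^2 := by
      intro y hy
      have : |y| ≤ 2*Y := abs_le.mpr ⟨hy.1, hy.2⟩
      have h1 : 0 ≤ 1 - |y|/(2*Y) := by
        rw [sub_nonneg, div_le_one hL]
        exact this
      positivity
    have m1 : ∫ y in (-Y)..Y, ‖F ψ y‖^2 ≤ ∫ y in (-Y)..Y, 2*(1-|y|/(2*Y)) * ‖F ψ y‖^2 := by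
      apply intervalIntegral.integral_mono_on (by linarith)
        (hcont2.intervalIntegrable _ _) (hcont3.intervalIntegrable _ _)
      intro y hy
      have hyY : |y| ≤ Y := abs_le.mpr ⟨hy.1, hy.2⟩
      have h1 : 1 ≤ 2*(1-|y|/(2*Y)) := by
        rw [← sub_nonneg]
        have : |y|/(2*Y) ≤ Y/(2*Y) := by gcongr
        have h2 : Y/(2*Y) = 1/2 := by field_simp
        rw [h2] at this
        linarith
      nlinarith [sq_nonneg ‖F ψ y‖]
    have hsplit : ∫ y in (-(2*Y))..(2*Y), 2*(1-|y|/(2*Y)) * ‖F ψ y‖^2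
        = (∫ y in (-(2*Y))..(-Y), 2*(1-|y|/(2*Y)) * ‖F ψ y‖^2)
          + (∫ y in (-Y)..Y, 2*(1-|y|/(2*Y)) * ‖F ψ y‖^2)
          + (∫ y in Y..(2*Y), 2*(1-|y|/(2*Y)) * ‖F ψ y‖^2) := by
      rw [intervalIntegral.integral_add_adjacent_intervals (a := -(2*Y)) (b := -Y) (c := Y)
        (hcont3.intervalIntegrable _ _) (hcont3.intervalIntegrable _ _),
        intervalIntegral.integral_add_adjacent_intervals (a := -(2*Y)) (b := Y) (c := 2*Y)
        (hcont3.intervalIntegrable _ _) (hcont3.intervalIntegrable _ _)]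
    have hnn1 : 0 ≤ ∫ y in (-(2*Y))..(-Y), 2*(1-|y|/(2*Y)) * ‖F ψ y‖^2 := by
      apply intervalIntegral.integral_nonneg (by linarith)
      intro u hu
      exact hnn u ⟨hu.1, by linarith [hu.2]⟩
    have hnn2 : 0 ≤ ∫ y in Y..(2*Y), 2*(1-|y|/(2*Y)) * ‖F ψ y‖^2 := by
      apply intervalIntegral.integral_nonneg (by linarith)
      intro u hu
      exact hnn u ⟨by linarith [hu.1], hu.2⟩
    rw [hsplit]
    linarith
  -- Step 2 : expand each smoothed integral
  have step2 : ∀ ψ : DirichletCharacter ℂ d, ∫ y in (-(2*Y))..(2*Y), 2*(1-|y|/(2*Y)) * ‖F ψ y‖^2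
      = (∑ m ∈ s, ∑ n ∈ s, b ψ m * (starRingEnd ℂ) (b ψ n)
          * (2 * (triK (2*Y) (Real.log m - Real.log n) : ℂ))).re :=
    fun ψ => expand_integral (2*Y) hL N (b ψ)
  -- Step 3 : swap the sums and use the character orthogonality bound
  set w : ℕ → ℕ → ℝ := fun m n => (2 * triK (2*Y) (Real.log m - Real.log n))
      * (if (m : ZMod d) = (n : ZMod d) then (d:ℝ) else 0) with hw
  have hwnonneg : ∀ m n, 0 ≤ w m n := by
    intro m n
    apply mul_nonneg
    · have := triK_nonneg hL (Real.log m - Real.log n); linarith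
    · split_ifs
      · exact hdR.le
      · exact le_refl 0
  have hwsymm : ∀ m n, w m n = w n m := by
    intro m n
    rw [hw]
    simp only
    rw [show Real.log n - Real.log m = -(Real.log m - Real.log n) by ring, triK_neg]
    congr 1
    simp only [eq_comm]
  have step3 : ∑ ψ : DirichletCharacter ℂ d,
      (∑ m ∈ s, ∑ n ∈ s, b ψ m * (starRingEnd ℂ) (b ψ n)
        * (2 * (triK (2*Y) (Real.log m - Real.log n) : ℂ))).re
      ≤ ∑ m ∈ s, ∑ n ∈ s, ‖a m‖ * ‖a n‖ * w m n := by
    have hQ : ∀ ψ : DirichletCharacter ℂ d,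
        ∑ m ∈ s, ∑ n ∈ s, b ψ m * (starRingEnd ℂ) (b ψ n)
          * (2 * (triK (2*Y) (Real.log m - Real.log n) : ℂ))
        = ∑ m ∈ s, ∑ n ∈ s, (a m * (starRingEnd ℂ) (a n)
            * (2 * (triK (2*Y) (Real.log m - Real.log n) : ℂ)))
            * (ψ (m : ZMod d) * (starRingEnd ℂ) (ψ (n : ZMod d))) := by
      intro ψ
      apply Finset.sum_congr rfl; intro m _
      apply Finset.sum_congr rfl; intro n _
      simp only [hb, map_mul]
      ring
    have h1 : ∑ ψ : DirichletCharacter ℂ d,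
        (∑ m ∈ s, ∑ n ∈ s, b ψ m * (starRingEnd ℂ) (b ψ n)
          * (2 * (triK (2*Y) (Real.log m - Real.log n) : ℂ))).re
        = (∑ m ∈ s, ∑ n ∈ s, (a m * (starRingEnd ℂ) (a n)
            * (2 * (triK (2*Y) (Real.log m - Real.log n) : ℂ)))
            * ∑ ψ : DirichletCharacter ℂ d,
              (ψ (m : ZMod d) * (starRingEnd ℂ) (ψ (n : ZMod d)))).re := by
      rw [← Complex.re_sum]
      congr 1
      rw [Finset.sum_congr rfl (fun ψ _ => hQ ψ), Finset.sum_comm]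
      apply Finset.sum_congr rfl; intro m _
      rw [Finset.sum_comm]
      apply Finset.sum_congr rfl; intro n _
      rw [← Finset.mul_sum]
    rw [h1]
    have h2 : ∀ m ∈ s, ∀ n ∈ s, ‖(a m * (starRingEnd ℂ) (a n)
        * (2 * (triK (2*Y) (Real.log m - Real.log n) : ℂ)))
        * ∑ ψ : DirichletCharacter ℂ d,
          (ψ (m : ZMod d) * (starRingEnd ℂ) (ψ (n : ZMod d)))‖
        ≤ ‖a m‖ * ‖a n‖ * w m n := by
      intro m _ n _
      have hKnn := triK_nonneg hL (Real.log m - Real.log n)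
      rw [norm_mul, norm_mul, norm_mul, norm_mul, RCLike.norm_conj]
      have e1 : ‖(2:ℂ)‖ = 2 := by norm_num
      have e2 : ‖((triK (2*Y) (Real.log m - Real.log n) : ℝ) : ℂ)‖
          = triK (2*Y) (Real.log m - Real.log n) := by
        rw [Complex.norm_real, Real.norm_eq_abs, _root_.abs_of_nonneg hKnn]
      rw [e1, e2, hw]
      simp only [mul_assoc]
      apply mul_le_mul_of_nonneg_left _ (norm_nonneg (a m))
      apply mul_le_mul_of_nonneg_left _ (norm_nonneg (a n))
      apply mul_le_mul_of_nonneg_left _ (by norm_num : (0:ℝ) ≤ 2)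
      apply mul_le_mul_of_nonneg_left _ hKnn
      exact char_sum_bound d m n
    calc (∑ m ∈ s, ∑ n ∈ s, (a m * (starRingEnd ℂ) (a n)
            * (2 * (triK (2*Y) (Real.log m - Real.log n) : ℂ)))
            * ∑ ψ : DirichletCharacter ℂ d,
              (ψ (m : ZMod d) * (starRingEnd ℂ) (ψ (n : ZMod d)))).re
        ≤ ‖∑ m ∈ s, ∑ n ∈ s, (a m * (starRingEnd ℂ) (a n)
            * (2 * (triK (2*Y) (Real.log m - Real.log n) : ℂ)))
            * ∑ ψ : DirichletCharacter ℂ d,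
              (ψ (m : ZMod d) * (starRingEnd ℂ) (ψ (n : ZMod d)))‖ :=
          Complex.re_le_norm _
      _ ≤ ∑ m ∈ s, ∑ n ∈ s, ‖(a m * (starRingEnd ℂ) (a n)
            * (2 * (triK (2*Y) (Real.log m - Real.log n) : ℂ)))
            * ∑ ψ : DirichletCharacter ℂ d,
              (ψ (m : ZMod d) * (starRingEnd ℂ) (ψ (n : ZMod d)))‖ :=
          (norm_sum_le _ _).trans (Finset.sum_le_sum (fun m _ => norm_sum_le _ _))
      _ ≤ ∑ m ∈ s, ∑ n ∈ s, ‖a m‖ * ‖a n‖ * w m n :=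
          Finset.sum_le_sum (fun m hm => Finset.sum_le_sum (fun n hn => h2 m hm n hn))
  -- Step 4 : symmetrization
  have step4 : ∑ m ∈ s, ∑ n ∈ s, ‖a m‖ * ‖a n‖ * w m n
      ≤ ∑ m ∈ s, ‖a m‖^2 * (∑ n ∈ s, w m n) := by
    have h1 : ∑ m ∈ s, ∑ n ∈ s, ‖a m‖ * ‖a n‖ * w m n
        ≤ ∑ m ∈ s, ∑ n ∈ s, (‖a m‖^2 + ‖a n‖^2)/2 * w m n := by
      apply Finset.sum_le_sum; intro m _
      apply Finset.sum_le_sum; intro n _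
      apply mul_le_mul_of_nonneg_right _ (hwnonneg m n)
      nlinarith [sq_nonneg (‖a m‖ - ‖a n‖)]
    have h2 : ∑ m ∈ s, ∑ n ∈ s, (‖a m‖^2 + ‖a n‖^2)/2 * w m n
        = ∑ m ∈ s, ∑ n ∈ s, ‖a m‖^2 * w m n := by
      have e1 : ∀ m n : ℕ, (‖a m‖^2 + ‖a n‖^2)/2 * w m n
          = ‖a m‖^2 * w m n / 2 + ‖a n‖^2 * w m n / 2 := by
        intro m n; ring
      simp only [e1, Finset.sum_add_distrib]
      have e2 : ∑ m ∈ s, ∑ n ∈ s, ‖a n‖^2 * w m n / 2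
          = ∑ m ∈ s, ∑ n ∈ s, ‖a m‖^2 * w m n / 2 := by
        rw [Finset.sum_comm]
        apply Finset.sum_congr rfl; intro m _
        apply Finset.sum_congr rfl; intro n _
        rw [hwsymm m n]
      rw [e2, ← Finset.sum_add_distrib]
      apply Finset.sum_congr rfl; intro m _
      rw [← Finset.sum_add_distrib]
      apply Finset.sum_congr rfl; intro n _
      ring
    refine h1.trans (le_of_eq ?_)
    rw [h2]
    apply Finset.sum_congr rfl; intro m _
    rw [Finset.mul_sum]
  -- Step 5 : local sum bound
  have step5 : ∀ m ∈ s, ∑ n ∈ s, w m n ≤ 24 * ((d:ℝ) * Y + N) := by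
    intro m hm
    have e1 : ∀ n : ℕ, w m n = if (n : ZMod d) = (m : ZMod d)
        then (2 * triK (2*Y) (Real.log m - Real.log n)) * d else 0 := by
      intro n
      rw [hw]
      simp only [eq_comm (a := (m : ZMod d))]
      split_ifs <;> simp
    have e2 : ∑ n ∈ s, w m n
        = ∑ n ∈ s.filter (fun n : ℕ => (n : ZMod d) = (m : ZMod d)),
            (2 * triK (2*Y) (Real.log m - Real.log n)) * d := by
      rw [Finset.sum_filter]
      exact Finset.sum_congr rfl (fun n _ => e1 n)
    have e3 : ∑ n ∈ s.filter (fun n : ℕ => (n : ZMod d) = (m : ZMod d)),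
          (2 * triK (2*Y) (Real.log m - Real.log n)) * d
        = (2*(d:ℝ)) * ∑ n ∈ s.filter (fun n : ℕ => (n : ZMod d) = (m : ZMod d)),
            triK (2*Y) (Real.log m - Real.log n) := by
      rw [Finset.mul_sum]
      apply Finset.sum_congr rfl; intro n _
      ring
    rw [e2, e3]
    have h4 := local_sum_bound Y hY d N m hm
    have h5 : (2*(d:ℝ)) * ∑ n ∈ s.filter (fun n : ℕ => (n : ZMod d) = (m : ZMod d)),
          triK (2*Y) (Real.log m - Real.log n) ≤ (2*(d:ℝ)) * (12 * (Y + (N:ℝ)/d)) :=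
      mul_le_mul_of_nonneg_left h4 (by positivity)
    refine h5.trans (le_of_eq ?_)
    field_simp
    ring
  -- assemble
  calc ∑ ψ : DirichletCharacter ℂ d, ∫ y in (-Y)..Y, ‖F ψ y‖^2
      ≤ ∑ ψ : DirichletCharacter ℂ d,
          ∫ y in (-(2*Y))..(2*Y), 2*(1-|y|/(2*Y)) * ‖F ψ y‖^2 :=
        Finset.sum_le_sum (fun ψ _ => step1 ψ)
    _ = ∑ ψ : DirichletCharacter ℂ d,
          (∑ m ∈ s, ∑ n ∈ s, b ψ m * (starRingEnd ℂ) (b ψ n)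
            * (2 * (triK (2*Y) (Real.log m - Real.log n) : ℂ))).re :=
        Finset.sum_congr rfl (fun ψ _ => step2 ψ)
    _ ≤ ∑ m ∈ s, ∑ n ∈ s, ‖a m‖ * ‖a n‖ * w m n := step3
    _ ≤ ∑ m ∈ s, ‖a m‖^2 * (∑ n ∈ s, w m n) := step4
    _ ≤ ∑ m ∈ s, ‖a m‖^2 * (24 * ((d:ℝ) * Y + N)) := by
        apply Finset.sum_le_sum
        intro m hm
        exact mul_le_mul_of_nonneg_left (step5 m hm) (by positivity)
    _ = 24 * ((d:ℝ) * Y + N) * ∑ n ∈ s, ‖a n‖^2 := by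
        rw [← Finset.sum_mul]
        ring
end

section
/- For every ε > 0 there is a constant C_ε such that for every positive integer q and every real X ≥ 1: Σ_{n ≤ X} rad(nq)^{−1/2} ≤ C_ε · rad(q)^{−1/2} · X^{1/2} · (qX)^ε, where the sum is over positive integers n ≤ X. -/
/-- The radical (squarefree kernel) `rad(n) = ∏_{p | n} p`. -/
def rad (n : ℕ) : ℕ := ∏ p ∈ n.primeFactors, p

open Finset

lemma rad_pos (n : ℕ) : 0 < rad n :=
  Finset.prod_pos fun p hp => (Nat.prime_of_mem_primeFactors hp).pos

lemma rad_dvd (n : ℕ) : rad n ∣ n := Nat.prod_primeFactors_dvd n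

lemma rad_le {n : ℕ} (hn : n ≠ 0) : rad n ≤ n :=
  Nat.le_of_dvd (Nat.pos_of_ne_zero hn) (rad_dvd n)

lemma rad_le_rad {m n : ℕ} (hn : n ≠ 0) (h : m ∣ n) : rad m ≤ rad n :=
  Nat.le_of_dvd (rad_pos n) <|
    Finset.prod_dvd_prod_of_subset _ _ _ (Nat.primeFactors_mono h hn)

lemma rad_gcd_mul (m n : ℕ) : rad (m.gcd n) * rad (m * n) = rad m * rad n :=
  Nat.prod_primeFactors_gcd_mul_prod_primeFactors_mul m n id

lemma geom_bound {y : ℝ} (h0 : 0 ≤ y) (h1 : y < 1) (K : ℕ) :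
    ∑ k ∈ Finset.range K, y ^ k ≤ (1 - y)⁻¹ := by
  have hy : 0 < 1 - y := by linarith
  have h2 : ∑ k ∈ Finset.range K, y ^ k = (1 - y ^ K) / (1 - y) := by
    rw [geom_sum_eq h1.ne]
    rw [div_eq_div_iff (by linarith) (by linarith)]
    ring
  rw [h2, inv_eq_one_div]
  apply div_le_div₀ (by norm_num) _ hy le_rfl
  have := pow_nonneg h0 K
  linarith

lemma sum_rpow_neg_le_prod {θ : ℝ} (hθ : 0 < θ) {P : Finset ℕ} (hP : ∀ p ∈ P, Nat.Prime p)
    {S : Finset ℕ} (hS : ∀ t ∈ S, t ≠ 0 ∧ t.primeFactors ⊆ P) :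
    ∑ t ∈ S, (t : ℝ) ^ (-θ) ≤ ∏ p ∈ P, (1 - (p : ℝ) ^ (-θ))⁻¹ := by
  classical
  set K := S.sup id + 1 with hK
  have hyp : ∀ p : ℕ, 0 ≤ (p : ℝ) ^ (-θ) := fun p => Real.rpow_nonneg (Nat.cast_nonneg p) _
  have hyp1 : ∀ p ∈ P, (p : ℝ) ^ (-θ) < 1 := fun p hp =>
    Real.rpow_lt_one_of_one_lt_of_neg (by exact_mod_cast (hP p hp).one_lt) (by linarith)
  -- each t ∈ S is the product over P of prime powers
  have hnat : ∀ t ∈ S, t = ∏ p ∈ P, p ^ t.factorization p := by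
    intro t ht
    obtain ⟨ht0, htP⟩ := hS t ht
    have h1 : ∏ p ∈ t.primeFactors, p ^ t.factorization p = t := by
      rw [← Nat.support_factorization]
      exact Nat.factorization_prod_pow_eq_self ht0
    have h2 : ∏ p ∈ t.primeFactors, p ^ t.factorization p = ∏ p ∈ P, p ^ t.factorization p := by
      refine Finset.prod_subset htP fun p _ hp => ?_
      by_cases hpp : p.Prime
      · have hnd : ¬ p ∣ t := fun hdvd => hp (Nat.mem_primeFactors.mpr ⟨hpp, hdvd, ht0⟩)
        rw [Nat.factorization_eq_zero_of_not_dvd hnd, pow_zero]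
      · rw [Nat.factorization_eq_zero_of_not_prime t hpp, pow_zero]
    rw [← h2, h1]
  have hterm : ∀ t ∈ S, (t : ℝ) ^ (-θ) = ∏ p ∈ P, ((p : ℝ) ^ (-θ)) ^ t.factorization p := by
    intro t ht
    have h2 : (t : ℝ) = ∏ p ∈ P, ((p : ℝ) ^ (t.factorization p : ℕ)) := by
      have h3 := congrArg (Nat.cast : ℕ → ℝ) (hnat t ht)
      push_cast at h3
      exact h3
    rw [h2, ← Real.finset_prod_rpow _ _ (fun p _ => pow_nonneg (Nat.cast_nonneg p) _) (-θ)]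
    refine Finset.prod_congr rfl fun p _ => ?_
    rw [← Real.rpow_natCast (p : ℝ) (t.factorization p), ← Real.rpow_natCast ((p:ℝ) ^ (-θ)),
      ← Real.rpow_mul (Nat.cast_nonneg p), ← Real.rpow_mul (Nat.cast_nonneg p), mul_comm]
  set Φ : ℕ → (∀ p ∈ P, ℕ) := fun t => fun p _ => t.factorization p with hΦ
  have himg : ∀ t ∈ S, Φ t ∈ P.pi fun _ => Finset.range K := by
    intro t ht
    rw [Finset.mem_pi]
    intro p hp
    rw [Finset.mem_range]
    show t.factorization p < K
    have h1 : t.factorization p < t := Nat.factorization_lt p (hS t ht).1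
    have h2 : t ≤ S.sup id := Finset.le_sup (f := id) ht
    omega
  have hinj : ∀ t ∈ S, ∀ t' ∈ S, Φ t = Φ t' → t = t' := by
    intro t ht t' ht' h
    rw [hnat t ht, hnat t' ht']
    refine Finset.prod_congr rfl fun p hp => ?_
    have := congrFun (congrFun h p) hp
    simp only [hΦ] at this
    rw [this]
  set G : (∀ p ∈ P, ℕ) → ℝ := fun g => ∏ x ∈ P.attach, ((x.1 : ℝ) ^ (-θ)) ^ (g x.1 x.2) with hG
  calc ∑ t ∈ S, (t : ℝ) ^ (-θ)
      = ∑ t ∈ S, G (Φ t) := by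
        refine Finset.sum_congr rfl fun t ht => ?_
        rw [hterm t ht, ← Finset.prod_attach P (fun p => ((p : ℝ) ^ (-θ)) ^ t.factorization p)]
    _ = ∑ g ∈ S.image Φ, G g := (Finset.sum_image hinj).symm
    _ ≤ ∑ g ∈ P.pi fun _ => Finset.range K, G g := by
        apply Finset.sum_le_sum_of_subset_of_nonneg
        · intro g hg
          obtain ⟨t, ht, rfl⟩ := Finset.mem_image.mp hg
          exact himg t ht
        · intro g _ _
          exact Finset.prod_nonneg fun x _ => pow_nonneg (hyp x.1) _
    _ = ∏ p ∈ P, ∑ k ∈ Finset.range K, ((p : ℝ) ^ (-θ)) ^ k := (Finset.prod_sum P (fun _ => Finset.range K) (fun p k => ((p : ℝ) ^ (-θ)) ^ k)).symm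
    _ ≤ ∏ p ∈ P, (1 - (p : ℝ) ^ (-θ))⁻¹ :=
        Finset.prod_le_prod (fun p _ => Finset.sum_nonneg fun k _ => pow_nonneg (hyp p) _)
          (fun p hp => geom_bound (hyp p) (hyp1 p hp) K)

lemma prod_pf_le {δ M : ℝ} (hδ : 0 ≤ δ) (hM : 1 ≤ M) (B : ℕ) (g : ℕ → ℝ) (q : ℕ) (hq : q ≠ 0)
    (hg1 : ∀ p ∈ q.primeFactors, 1 ≤ g p) (hgM : ∀ p ∈ q.primeFactors, g p ≤ M)
    (hg2 : ∀ p ∈ q.primeFactors, B ≤ p → g p ≤ (p : ℝ) ^ δ) :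
    ∏ p ∈ q.primeFactors, g p ≤ M ^ B * (q : ℝ) ^ δ := by
  classical
  rw [← Finset.prod_filter_mul_prod_filter_not q.primeFactors (fun p => p < B)]
  have h1 : ∏ p ∈ q.primeFactors.filter (fun p => p < B), g p ≤ M ^ B := by
    calc ∏ p ∈ q.primeFactors.filter (fun p => p < B), g p
        ≤ ∏ p ∈ q.primeFactors.filter (fun p => p < B), M :=
          Finset.prod_le_prod
            (fun p hp => le_trans zero_le_one (hg1 p (Finset.mem_of_mem_filter p hp)))
            (fun p hp => hgM p (Finset.mem_of_mem_filter p hp))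
      _ = M ^ (q.primeFactors.filter (fun p => p < B)).card := Finset.prod_const M
      _ ≤ M ^ B := by
          apply pow_le_pow_right₀ hM
          calc (q.primeFactors.filter (fun p => p < B)).card
              ≤ (Finset.range B).card := Finset.card_le_card fun p hp =>
                Finset.mem_range.mpr (Finset.mem_filter.mp hp).2
            _ = B := Finset.card_range B
  have h2 : ∏ p ∈ q.primeFactors.filter (fun p => ¬ p < B), g p ≤ (q : ℝ) ^ δ := by
    have hdvd : ∏ p ∈ q.primeFactors.filter (fun p => ¬ p < B), p ∣ q :=
      dvd_trans (Finset.prod_dvd_prod_of_subset _ _ _ (Finset.filter_subset _ _))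
        (Nat.prod_primeFactors_dvd q)
    calc ∏ p ∈ q.primeFactors.filter (fun p => ¬ p < B), g p
        ≤ ∏ p ∈ q.primeFactors.filter (fun p => ¬ p < B), (p : ℝ) ^ δ :=
          Finset.prod_le_prod
            (fun p hp => le_trans zero_le_one (hg1 p (Finset.mem_of_mem_filter p hp)))
            (fun p hp => hg2 p (Finset.mem_of_mem_filter p hp)
              (le_of_not_gt (Finset.mem_filter.mp hp).2))
      _ = ((∏ p ∈ q.primeFactors.filter (fun p => ¬ p < B), p : ℕ) : ℝ) ^ δ := by
          rw [Real.finset_prod_rpow _ _ (fun p _ => Nat.cast_nonneg p) δ]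
          push_cast
          ring
      _ ≤ (q : ℝ) ^ δ := by
          apply Real.rpow_le_rpow (Nat.cast_nonneg _) _ hδ
          exact_mod_cast Nat.le_of_dvd (Nat.pos_of_ne_zero hq) hdvd
  have hP2 : (0:ℝ) ≤ ∏ p ∈ q.primeFactors.filter (fun p => ¬ p < B), g p :=
    Finset.prod_nonneg fun p hp =>
      le_trans zero_le_one (hg1 p (Finset.mem_of_mem_filter p hp))
  have hMB : (0:ℝ) ≤ M ^ B := le_trans zero_le_one (one_le_pow₀ hM)
  exact mul_le_mul h1 h2 hP2 hMB

lemma euler_prod_bound {θ δ : ℝ} (hθ : 0 < θ) (hδ : 0 < δ) :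
    ∃ C : ℝ, 1 ≤ C ∧ ∀ q : ℕ, q ≠ 0 →
      ∏ p ∈ q.primeFactors, (1 - (p : ℝ) ^ (-θ))⁻¹ ≤ C * (q : ℝ) ^ δ := by
  have h2 : (2:ℝ) ^ (-θ) < 1 := Real.rpow_lt_one_of_one_lt_of_neg one_lt_two (by linarith)
  have h2' : (0:ℝ) < 1 - (2:ℝ) ^ (-θ) := by linarith
  have h2'' : (0:ℝ) ≤ (2:ℝ) ^ (-θ) := Real.rpow_nonneg (by norm_num) _
  set M := (1 - (2:ℝ) ^ (-θ))⁻¹ with hMdef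
  have hM1 : 1 ≤ M := by
    rw [hMdef, one_le_inv_iff₀]
    constructor
    · exact h2'
    · linarith
  set B := ⌈M ^ (1/δ)⌉₊ with hB
  have hfact : ∀ p : ℕ, p.Prime → (0:ℝ) < 1 - (p:ℝ) ^ (-θ) ∧ (p:ℝ) ^ (-θ) ≤ (2:ℝ) ^ (-θ) := by
    intro p hp
    have hple : ((2:ℕ):ℝ) ≤ (p:ℝ) := by exact_mod_cast hp.two_le
    have := Real.rpow_le_rpow_of_nonpos (x := (2:ℝ)) (y := (p:ℝ)) (by norm_num) (by exact_mod_cast hple) (by linarith : -θ ≤ 0)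
    constructor
    · linarith
    · exact this
  refine ⟨M ^ B, le_trans hM1 (le_self_pow₀ (by linarith) (by positivity)), fun q hq => ?_⟩
  apply prod_pf_le hδ.le hM1 B _ q hq
  · intro p hp
    have hpp := Nat.prime_of_mem_primeFactors hp
    obtain ⟨hpos, hle⟩ := hfact p hpp
    rw [one_le_inv_iff₀]
    have : (0:ℝ) ≤ (p:ℝ) ^ (-θ) := Real.rpow_nonneg (Nat.cast_nonneg p) _
    exact ⟨hpos, by linarith⟩
  · intro p hp
    have hpp := Nat.prime_of_mem_primeFactors hp
    obtain ⟨hpos, hle⟩ := hfact p hpp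
    rw [hMdef]
    apply inv_anti₀ h2'
    linarith
  · intro p hp hBp
    have hpp := Nat.prime_of_mem_primeFactors hp
    obtain ⟨hpos, hle⟩ := hfact p hpp
    have hg : (1 - (p:ℝ) ^ (-θ))⁻¹ ≤ M := by
      rw [hMdef]; apply inv_anti₀ h2'; linarith
    refine le_trans hg ?_
    have hMp : M ^ (1/δ) ≤ (p:ℝ) := le_trans (Nat.le_ceil _) (by exact_mod_cast hBp)
    calc M = (M ^ (1/δ)) ^ δ := by
          rw [← Real.rpow_mul (by linarith : (0:ℝ) ≤ M), one_div,
            inv_mul_cancel₀ hδ.ne', Real.rpow_one]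
      _ ≤ (p:ℝ) ^ δ := Real.rpow_le_rpow (Real.rpow_nonneg (by linarith) _) hMp hδ.le

lemma sum_inv_le_one_add_log (M : ℕ) : ∑ r ∈ Finset.Icc 1 M, (r : ℝ)⁻¹ ≤ 1 + Real.log M := by
  have h := harmonic_le_one_add_log M
  rw [harmonic_eq_sum_Icc] at h
  push_cast at h
  exact h

lemma one_add_log_le {δ : ℝ} (hδ : 0 < δ) {x : ℝ} (hx : 1 ≤ x) :
    1 + Real.log x ≤ (1 + 1/δ) * x ^ δ := by
  have hx0 : (0:ℝ) < x := by linarith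
  have h2 : Real.log (x ^ δ) = δ * Real.log x := Real.log_rpow hx0 δ
  have h3 : Real.log (x ^ δ) ≤ x ^ δ - 1 :=
    Real.log_le_sub_one_of_pos (Real.rpow_pos_of_pos hx0 δ)
  have h4 : 1 ≤ x ^ δ := Real.one_le_rpow hx hδ.le
  have h5 : δ * Real.log x ≤ x ^ δ - 1 := by rw [← h2]; exact h3
  have hlog : Real.log x ≤ (x ^ δ - 1) / δ := (le_div_iff₀ hδ).mpr (by linarith)
  have h7 : (1 + 1/δ) * x ^ δ = x ^ δ + x ^ δ / δ := by ring
  have h8 : (x ^ δ - 1) / δ = x ^ δ / δ - 1 / δ := by ring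
  rw [h7]
  have h9 : (0:ℝ) < 1 / δ := by positivity
  linarith

lemma rad_sum_le {δ : ℝ} (hδ : 0 < δ) :
    ∃ C : ℝ, 1 ≤ C ∧ ∀ M : ℕ,
      ∑ m ∈ Finset.Icc 1 M, (rad m : ℝ) ^ (-(1:ℝ)/2) ≤ C * (M : ℝ) ^ ((1:ℝ)/2 + 2*δ) := by
  classical
  obtain ⟨C₀, hC₀1, hC₀⟩ := euler_prod_bound (θ := (1:ℝ)/2) (δ := δ) (by norm_num) hδ
  have hC₀0 : (0:ℝ) < C₀ := by linarith
  have hδ' : (0:ℝ) < 1/δ := by positivity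
  refine ⟨C₀ * (1 + 1/δ), by nlinarith, fun M => ?_⟩
  by_cases hM0 : M = 0
  · subst hM0
    rw [show Finset.Icc 1 0 = (∅ : Finset ℕ) by rfl]
    rw [Finset.sum_empty, Nat.cast_zero, Real.zero_rpow (by positivity : ((1:ℝ)/2 + 2*δ) ≠ 0)]
    simp
  have hM1 : 1 ≤ M := Nat.one_le_iff_ne_zero.mpr hM0
  have hM1' : (1:ℝ) ≤ (M:ℝ) := by exact_mod_cast hM1
  have hMpos : (0:ℝ) < (M:ℝ) := by linarith
  have hmaps : ∀ m ∈ Finset.Icc 1 M, rad m ∈ Finset.Icc 1 M := by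
    intro m hm
    obtain ⟨h1, h2⟩ := Finset.mem_Icc.mp hm
    exact Finset.mem_Icc.mpr ⟨rad_pos m, le_trans (rad_le (by omega)) h2⟩
  have hfiber : ∀ r ∈ Finset.Icc 1 M,
      ∑ m ∈ (Finset.Icc 1 M).filter (fun m => rad m = r), (rad m : ℝ) ^ (-(1:ℝ)/2)
        ≤ C₀ * ((M:ℝ) ^ ((1:ℝ)/2) * ((r:ℝ) ^ δ * (r:ℝ)⁻¹)) := by
    intro r hr
    obtain ⟨hr1, hrM⟩ := Finset.mem_Icc.mp hr
    have hr0 : r ≠ 0 := by omega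
    have hrpos : (0:ℝ) < (r:ℝ) := by exact_mod_cast Nat.pos_of_ne_zero hr0
    have hmem : ∀ m ∈ (Finset.Icc 1 M).filter (fun m => rad m = r),
        m ≠ 0 ∧ r ∣ m ∧ m ≤ M ∧ rad m = r := by
      intro m hm
      obtain ⟨hmIcc, hradm⟩ := Finset.mem_filter.mp hm
      obtain ⟨hm1, hmM⟩ := Finset.mem_Icc.mp hmIcc
      exact ⟨by omega, hradm ▸ rad_dvd m, hmM, hradm⟩
    have hpt : ∀ m ∈ (Finset.Icc 1 M).filter (fun m => rad m = r),
        (rad m : ℝ) ^ (-(1:ℝ)/2)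
          ≤ (M:ℝ) ^ ((1:ℝ)/2) * (r:ℝ)⁻¹ * ((m / r : ℕ) : ℝ) ^ (-(1:ℝ)/2) := by
      intro m hm
      obtain ⟨hm0, hrdvd, hmM, hradm⟩ := hmem m hm
      have htm : r * (m / r) = m := Nat.mul_div_cancel' hrdvd
      have ht0 : m / r ≠ 0 := by
        intro h; rw [h, mul_zero] at htm; exact hm0 htm.symm
      have htpos : (0:ℝ) < ((m / r : ℕ):ℝ) := by exact_mod_cast Nat.pos_of_ne_zero ht0
      have hrtM : (r:ℝ) * ((m / r : ℕ):ℝ) ≤ (M:ℝ) := by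
        have : r * (m / r) ≤ M := by rw [htm]; exact hmM
        exact_mod_cast this
      have h1 : (r:ℝ) ≤ (M:ℝ) / ((m / r : ℕ):ℝ) := (le_div_iff₀ htpos).mpr hrtM
      rw [hradm]
      have h2 : (r:ℝ) ^ (-(1:ℝ)/2) = (r:ℝ)⁻¹ * (r:ℝ) ^ ((1:ℝ)/2) := by
        rw [← Real.rpow_neg_one, ← Real.rpow_add hrpos]
        norm_num
      have h3 : (r:ℝ) ^ ((1:ℝ)/2) ≤ ((M:ℝ) / ((m / r : ℕ):ℝ)) ^ ((1:ℝ)/2) :=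
        Real.rpow_le_rpow hrpos.le h1 (by norm_num)
      have h4 : ((M:ℝ) / ((m / r : ℕ):ℝ)) ^ ((1:ℝ)/2)
          = (M:ℝ) ^ ((1:ℝ)/2) * (((m / r : ℕ):ℝ)) ^ (-(1:ℝ)/2) := by
        rw [Real.div_rpow hMpos.le htpos.le, div_eq_mul_inv,
          show (-(1:ℝ)/2) = -((1:ℝ)/2) by norm_num, Real.rpow_neg htpos.le]
      calc (r:ℝ) ^ (-(1:ℝ)/2) = (r:ℝ)⁻¹ * (r:ℝ) ^ ((1:ℝ)/2) := h2
        _ ≤ (r:ℝ)⁻¹ * ((M:ℝ) / ((m / r : ℕ):ℝ)) ^ ((1:ℝ)/2) :=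
            mul_le_mul_of_nonneg_left h3 (inv_nonneg.mpr hrpos.le)
        _ = (M:ℝ) ^ ((1:ℝ)/2) * (r:ℝ)⁻¹ * ((m / r : ℕ):ℝ) ^ (-(1:ℝ)/2) := by
            rw [h4]; ring
    have hinj : ∀ m ∈ (Finset.Icc 1 M).filter (fun m => rad m = r),
        ∀ m' ∈ (Finset.Icc 1 M).filter (fun m => rad m = r), m / r = m' / r → m = m' := by
      intro m hm m' hm' h
      obtain ⟨_, hd, _, _⟩ := hmem m hm
      obtain ⟨_, hd', _, _⟩ := hmem m' hm'
      rw [← Nat.mul_div_cancel' hd, ← Nat.mul_div_cancel' hd', h]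
    have hsub : ∀ t ∈ ((Finset.Icc 1 M).filter (fun m => rad m = r)).image (· / r),
        t ≠ 0 ∧ t.primeFactors ⊆ r.primeFactors := by
      intro t ht
      obtain ⟨m, hm, rfl⟩ := Finset.mem_image.mp ht
      obtain ⟨hm0, hd, hmM, hradm⟩ := hmem m hm
      have htm : r * (m / r) = m := Nat.mul_div_cancel' hd
      refine ⟨fun h => by rw [h, mul_zero] at htm; exact hm0 htm.symm, ?_⟩
      have h1 : m / r ∣ m := ⟨r, by rw [mul_comm] at htm; exact htm.symm⟩
      have h2 : (m / r).primeFactors ⊆ m.primeFactors := Nat.primeFactors_mono h1 hm0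
      have h3 : r.primeFactors = m.primeFactors := by
        rw [← hradm]
        exact Nat.primeFactors_prod fun p hp => Nat.prime_of_mem_primeFactors hp
      rw [h3]; exact h2
    have hnn : (0:ℝ) ≤ (M:ℝ) ^ ((1:ℝ)/2) * (r:ℝ)⁻¹ := by positivity
    calc ∑ m ∈ (Finset.Icc 1 M).filter (fun m => rad m = r), (rad m : ℝ) ^ (-(1:ℝ)/2)
        ≤ ∑ m ∈ (Finset.Icc 1 M).filter (fun m => rad m = r),
            (M:ℝ) ^ ((1:ℝ)/2) * (r:ℝ)⁻¹ * ((m / r : ℕ) : ℝ) ^ (-(1:ℝ)/2) :=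
          Finset.sum_le_sum hpt
      _ = (M:ℝ) ^ ((1:ℝ)/2) * (r:ℝ)⁻¹ *
            ∑ m ∈ (Finset.Icc 1 M).filter (fun m => rad m = r), ((m / r : ℕ) : ℝ) ^ (-(1:ℝ)/2) := by
          rw [Finset.mul_sum]
      _ = (M:ℝ) ^ ((1:ℝ)/2) * (r:ℝ)⁻¹ *
            ∑ t ∈ ((Finset.Icc 1 M).filter (fun m => rad m = r)).image (· / r),
              (t : ℝ) ^ (-(1:ℝ)/2) := by
          rw [Finset.sum_image hinj]
      _ ≤ (M:ℝ) ^ ((1:ℝ)/2) * (r:ℝ)⁻¹ * ∏ p ∈ r.primeFactors, (1 - (p:ℝ) ^ (-((1:ℝ)/2)))⁻¹ := by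
          apply mul_le_mul_of_nonneg_left _ hnn
          have := sum_rpow_neg_le_prod (θ := (1:ℝ)/2) (by norm_num)
            (fun p hp => Nat.prime_of_mem_primeFactors hp) hsub
          simpa [neg_div] using this
      _ ≤ (M:ℝ) ^ ((1:ℝ)/2) * (r:ℝ)⁻¹ * (C₀ * (r:ℝ) ^ δ) :=
          mul_le_mul_of_nonneg_left (hC₀ r hr0) hnn
      _ = C₀ * ((M:ℝ) ^ ((1:ℝ)/2) * ((r:ℝ) ^ δ * (r:ℝ)⁻¹)) := by ring
  calc ∑ m ∈ Finset.Icc 1 M, (rad m : ℝ) ^ (-(1:ℝ)/2)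
      = ∑ r ∈ Finset.Icc 1 M, ∑ m ∈ (Finset.Icc 1 M).filter (fun m => rad m = r),
          (rad m : ℝ) ^ (-(1:ℝ)/2) :=
        (Finset.sum_fiberwise_of_maps_to hmaps _).symm
    _ ≤ ∑ r ∈ Finset.Icc 1 M, C₀ * ((M:ℝ) ^ ((1:ℝ)/2) * ((r:ℝ) ^ δ * (r:ℝ)⁻¹)) :=
        Finset.sum_le_sum hfiber
    _ ≤ ∑ r ∈ Finset.Icc 1 M, C₀ * (M:ℝ) ^ ((1:ℝ)/2) * (M:ℝ) ^ δ * (r:ℝ)⁻¹ := by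
        apply Finset.sum_le_sum
        intro r hr
        obtain ⟨hr1, hrM⟩ := Finset.mem_Icc.mp hr
        have hrpos : (0:ℝ) < (r:ℝ) := by exact_mod_cast Nat.lt_of_lt_of_le Nat.zero_lt_one hr1
        have hrδ : (r:ℝ) ^ δ ≤ (M:ℝ) ^ δ :=
          Real.rpow_le_rpow hrpos.le (by exact_mod_cast hrM) hδ.le
        have : C₀ * ((M:ℝ) ^ ((1:ℝ)/2) * ((r:ℝ) ^ δ * (r:ℝ)⁻¹))
            = C₀ * (M:ℝ) ^ ((1:ℝ)/2) * (r:ℝ) ^ δ * (r:ℝ)⁻¹ := by ring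
        rw [this]
        apply mul_le_mul_of_nonneg_right _ (inv_nonneg.mpr hrpos.le)
        apply mul_le_mul_of_nonneg_left hrδ (by positivity)
    _ = C₀ * (M:ℝ) ^ ((1:ℝ)/2) * (M:ℝ) ^ δ * ∑ r ∈ Finset.Icc 1 M, (r:ℝ)⁻¹ := by
        rw [Finset.mul_sum]
    _ ≤ C₀ * (M:ℝ) ^ ((1:ℝ)/2) * (M:ℝ) ^ δ * ((1 + 1/δ) * (M:ℝ) ^ δ) := by
        apply mul_le_mul_of_nonneg_left _ (by positivity)
        exact le_trans (sum_inv_le_one_add_log M) (one_add_log_le hδ hM1')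
    _ = (C₀ * (1 + 1/δ)) * (M:ℝ) ^ ((1:ℝ)/2 + 2*δ) := by
        rw [show (1:ℝ)/2 + 2*δ = ((1:ℝ)/2 + δ) + δ by ring, Real.rpow_add hMpos,
          Real.rpow_add hMpos]
        ring

lemma sum_div_fiber_le {N d : ℕ} (hd : 0 < d) (F : Finset ℕ)
    (hF : ∀ n ∈ F, d ∣ n ∧ 1 ≤ n ∧ n ≤ N) :
    ∑ n ∈ F, (rad n : ℝ) ^ (-(1:ℝ)/2) ≤ ∑ m ∈ Finset.Icc 1 (N / d), (rad m : ℝ) ^ (-(1:ℝ)/2) := by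
  classical
  have hpt : ∀ n ∈ F, (rad n : ℝ) ^ (-(1:ℝ)/2) ≤ (rad (n / d) : ℝ) ^ (-(1:ℝ)/2) := by
    intro n hn
    obtain ⟨hdn, hn1, hnN⟩ := hF n hn
    have h1 : rad (n / d) ≤ rad n := rad_le_rad (by omega) (Nat.div_dvd_of_dvd hdn)
    have h2 : (0:ℝ) < (rad (n / d) : ℝ) := by exact_mod_cast rad_pos _
    exact Real.rpow_le_rpow_of_nonpos h2 (by exact_mod_cast h1) (by norm_num)
  have hinj : ∀ n ∈ F, ∀ n' ∈ F, n / d = n' / d → n = n' := by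
    intro n hn n' hn' h
    rw [← Nat.mul_div_cancel' (hF n hn).1, ← Nat.mul_div_cancel' (hF n' hn').1, h]
  calc ∑ n ∈ F, (rad n : ℝ) ^ (-(1:ℝ)/2)
      ≤ ∑ n ∈ F, (rad (n / d) : ℝ) ^ (-(1:ℝ)/2) := Finset.sum_le_sum hpt
    _ = ∑ m ∈ F.image (· / d), (rad m : ℝ) ^ (-(1:ℝ)/2) := by rw [Finset.sum_image hinj]
    _ ≤ ∑ m ∈ Finset.Icc 1 (N / d), (rad m : ℝ) ^ (-(1:ℝ)/2) := by
        apply Finset.sum_le_sum_of_subset_of_nonneg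
        · intro m hm
          obtain ⟨n, hn, rfl⟩ := Finset.mem_image.mp hm
          obtain ⟨hdn, hn1, hnN⟩ := hF n hn
          refine Finset.mem_Icc.mpr ⟨?_, Nat.div_le_div_right hnN⟩
          exact (Nat.one_le_div_iff hd).mpr (Nat.le_of_dvd (by omega) hdn)
        · intro m _ _
          exact Real.rpow_nonneg (Nat.cast_nonneg _) _

lemma main_pointwise {n q : ℕ} (hn : n ≠ 0) (hq : q ≠ 0) :
    (rad (n * q) : ℝ) ^ (-(1:ℝ)/2)
      ≤ (Nat.gcd n q : ℝ) ^ ((1:ℝ)/2) * ((rad n : ℝ) ^ (-(1:ℝ)/2) * (rad q : ℝ) ^ (-(1:ℝ)/2)) := by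
  have hg0 : Nat.gcd n q ≠ 0 := fun h => hq (Nat.eq_zero_of_gcd_eq_zero_right h)
  have hkey : rad n * rad q ≤ Nat.gcd n q * rad (n * q) := by
    calc rad n * rad q = rad (Nat.gcd n q) * rad (n * q) := (rad_gcd_mul n q).symm
      _ ≤ Nat.gcd n q * rad (n * q) := Nat.mul_le_mul_right _ (rad_le hg0)
  have hA : (0:ℝ) < (rad (n * q) : ℝ) := by exact_mod_cast rad_pos _
  have hG : (0:ℝ) < (Nat.gcd n q : ℝ) := by exact_mod_cast Nat.pos_of_ne_zero hg0
  have hRn : (0:ℝ) < (rad n : ℝ) := by exact_mod_cast rad_pos n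
  have hRq : (0:ℝ) < (rad q : ℝ) := by exact_mod_cast rad_pos q
  have hkey' : (rad n : ℝ) * (rad q : ℝ) ≤ (Nat.gcd n q : ℝ) * (rad (n * q) : ℝ) := by
    exact_mod_cast hkey
  have h1 : ((rad n : ℝ) * (rad q : ℝ)) ^ ((1:ℝ)/2)
      ≤ ((Nat.gcd n q : ℝ) * (rad (n * q) : ℝ)) ^ ((1:ℝ)/2) :=
    Real.rpow_le_rpow (by positivity) hkey' (by norm_num)
  rw [Real.mul_rpow hRn.le hRq.le, Real.mul_rpow hG.le hA.le] at h1
  have e : ∀ x : ℝ, 0 < x → x ^ (-(1:ℝ)/2) = (x ^ ((1:ℝ)/2))⁻¹ := fun x hx => by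
    rw [show (-(1:ℝ)/2) = -((1:ℝ)/2) by norm_num, Real.rpow_neg hx.le]
  rw [e _ hA, e _ hRn, e _ hRq, ← mul_inv]
  have hA2 : (0:ℝ) < (rad (n * q) : ℝ) ^ ((1:ℝ)/2) := Real.rpow_pos_of_pos hA _
  have hb : (0:ℝ) < (rad n : ℝ) ^ ((1:ℝ)/2) * (rad q : ℝ) ^ ((1:ℝ)/2) := by
    have := Real.rpow_pos_of_pos hRn ((1:ℝ)/2)
    have := Real.rpow_pos_of_pos hRq ((1:ℝ)/2)
    positivity
  rw [← div_eq_mul_inv, inv_eq_one_div, div_le_div_iff₀ hA2 hb, one_mul]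
  calc (rad n : ℝ) ^ ((1:ℝ)/2) * (rad q : ℝ) ^ ((1:ℝ)/2)
      ≤ (Nat.gcd n q : ℝ) ^ ((1:ℝ)/2) * (rad (n * q) : ℝ) ^ ((1:ℝ)/2) := h1
    _ = (Nat.gcd n q : ℝ) ^ ((1:ℝ)/2) * (rad (n * q) : ℝ) ^ ((1:ℝ)/2) := rfl

/-- Lemma `radicalsum`: for every `ε > 0` there is a constant `C_ε` such that
for every `q ≥ 1` and `X ≥ 1`,
`Σ_{n ≤ X} rad(nq)^{-1/2} ≤ C_ε · rad(q)^{-1/2} · X^{1/2} · (qX)^ε`. -/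
theorem radical_sum_bound :
    ∀ ε : ℝ, 0 < ε → ∃ C : ℝ, ∀ q : ℕ, 0 < q → ∀ X : ℝ, 1 ≤ X →
      ∑ n ∈ Finset.Icc 1 ⌊X⌋₊, ((rad (n * q) : ℝ)) ^ (-(1 : ℝ) / 2)
        ≤ C * ((rad q : ℝ)) ^ (-(1 : ℝ) / 2) * X ^ ((1 : ℝ) / 2) * ((q : ℝ) * X) ^ ε := by
  intro ε hε
  obtain ⟨C₁, hC₁1, hC₁⟩ := rad_sum_le (δ := ε/4) (by linarith)
  obtain ⟨C₂, hC₂1, hC₂⟩ := euler_prod_bound (θ := ε/2) (δ := ε/2) (by linarith) (by linarith)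
  have hC₁0 : (0:ℝ) < C₁ := by linarith
  have hC₂0 : (0:ℝ) < C₂ := by linarith
  refine ⟨C₁ * C₂, fun q hq X hX => ?_⟩
  classical
  set N := ⌊X⌋₊ with hN
  have hq0 : q ≠ 0 := Nat.pos_iff_ne_zero.mp hq
  have hXpos : (0:ℝ) < X := by linarith
  have hNX : (N:ℝ) ≤ X := Nat.floor_le hXpos.le
  have hradq : (0:ℝ) < (rad q : ℝ) := by exact_mod_cast rad_pos q
  set s : ℝ := (1:ℝ)/2 + 2*(ε/4) with hs
  have hs0 : (0:ℝ) ≤ s := by rw [hs]; linarith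
  have hq1 : (1:ℝ) ≤ (q:ℝ) := by exact_mod_cast hq
  have step1 : ∑ n ∈ Finset.Icc 1 N, (rad (n*q) : ℝ) ^ (-(1:ℝ)/2)
      ≤ (rad q : ℝ) ^ (-(1:ℝ)/2) *
        ∑ n ∈ Finset.Icc 1 N, (Nat.gcd n q : ℝ) ^ ((1:ℝ)/2) * (rad n : ℝ) ^ (-(1:ℝ)/2) := by
    rw [Finset.mul_sum]
    apply Finset.sum_le_sum
    intro n hn
    have hn0 : n ≠ 0 := by have := (Finset.mem_Icc.mp hn).1; omega
    calc (rad (n*q) : ℝ) ^ (-(1:ℝ)/2)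
        ≤ (Nat.gcd n q : ℝ) ^ ((1:ℝ)/2) * ((rad n : ℝ) ^ (-(1:ℝ)/2) * (rad q : ℝ) ^ (-(1:ℝ)/2)) :=
          main_pointwise hn0 hq0
      _ = (rad q : ℝ) ^ (-(1:ℝ)/2) * ((Nat.gcd n q : ℝ) ^ ((1:ℝ)/2) * (rad n : ℝ) ^ (-(1:ℝ)/2)) := by
          ring
  have hmaps : ∀ n ∈ Finset.Icc 1 N, Nat.gcd n q ∈ q.divisors := fun n _ =>
    Nat.mem_divisors.mpr ⟨Nat.gcd_dvd_right n q, hq0⟩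
  have step2 : ∑ n ∈ Finset.Icc 1 N, (Nat.gcd n q : ℝ) ^ ((1:ℝ)/2) * (rad n : ℝ) ^ (-(1:ℝ)/2)
      ≤ ∑ d ∈ q.divisors, (d:ℝ) ^ ((1:ℝ)/2) * (C₁ * ((N:ℝ)/(d:ℝ)) ^ s) := by
    rw [← Finset.sum_fiberwise_of_maps_to hmaps]
    apply Finset.sum_le_sum
    intro d hd
    obtain ⟨hdq, _⟩ := Nat.mem_divisors.mp hd
    have hdpos : 0 < d := Nat.pos_of_dvd_of_pos hdq hq
    have hdpos' : (0:ℝ) < (d:ℝ) := by exact_mod_cast hdpos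
    calc ∑ n ∈ (Finset.Icc 1 N).filter (fun n => Nat.gcd n q = d),
            (Nat.gcd n q : ℝ) ^ ((1:ℝ)/2) * (rad n : ℝ) ^ (-(1:ℝ)/2)
        = (d:ℝ) ^ ((1:ℝ)/2) * ∑ n ∈ (Finset.Icc 1 N).filter (fun n => Nat.gcd n q = d),
            (rad n : ℝ) ^ (-(1:ℝ)/2) := by
          rw [Finset.mul_sum]
          refine Finset.sum_congr rfl fun n hn => ?_
          rw [(Finset.mem_filter.mp hn).2]
      _ ≤ (d:ℝ) ^ ((1:ℝ)/2) * (C₁ * ((N:ℝ)/(d:ℝ)) ^ s) := by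
          apply mul_le_mul_of_nonneg_left _ (Real.rpow_nonneg hdpos'.le _)
          calc ∑ n ∈ (Finset.Icc 1 N).filter (fun n => Nat.gcd n q = d), (rad n : ℝ) ^ (-(1:ℝ)/2)
              ≤ ∑ m ∈ Finset.Icc 1 (N/d), (rad m : ℝ) ^ (-(1:ℝ)/2) := by
                apply sum_div_fiber_le hdpos
                intro n hn
                obtain ⟨hnI, hgcd⟩ := Finset.mem_filter.mp hn
                obtain ⟨h1, h2⟩ := Finset.mem_Icc.mp hnI
                exact ⟨hgcd ▸ Nat.gcd_dvd_left n q, h1, h2⟩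
            _ ≤ C₁ * ((N/d : ℕ):ℝ) ^ s := hC₁ (N/d)
            _ ≤ C₁ * ((N:ℝ)/(d:ℝ)) ^ s := by
                apply mul_le_mul_of_nonneg_left _ (by linarith)
                exact Real.rpow_le_rpow (Nat.cast_nonneg _) Nat.cast_div_le hs0
  have step3 : ∑ d ∈ q.divisors, (d:ℝ) ^ ((1:ℝ)/2) * (C₁ * ((N:ℝ)/(d:ℝ)) ^ s)
      ≤ C₁ * (N:ℝ) ^ s * (C₂ * (q:ℝ) ^ (ε/2)) := by
    have hNnn : (0:ℝ) ≤ (N:ℝ) := Nat.cast_nonneg N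
    have hrw : ∀ d ∈ q.divisors, (d:ℝ) ^ ((1:ℝ)/2) * (C₁ * ((N:ℝ)/(d:ℝ)) ^ s)
        = C₁ * (N:ℝ) ^ s * (d:ℝ) ^ (-(ε/2)) := by
      intro d hd
      have hdpos : 0 < d := Nat.pos_of_dvd_of_pos (Nat.mem_divisors.mp hd).1 hq
      have hdpos' : (0:ℝ) < (d:ℝ) := by exact_mod_cast hdpos
      rw [Real.div_rpow hNnn hdpos'.le,
        div_eq_mul_inv ((N:ℝ) ^ s) ((d:ℝ) ^ s), ← Real.rpow_neg hdpos'.le]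
      have h5 : (d:ℝ) ^ ((1:ℝ)/2) * (d:ℝ) ^ (-s) = (d:ℝ) ^ (-(ε/2)) := by
        rw [← Real.rpow_add hdpos']
        congr 1
        rw [hs]; ring
      calc (d:ℝ) ^ ((1:ℝ)/2) * (C₁ * ((N:ℝ) ^ s * (d:ℝ) ^ (-s)))
          = C₁ * (N:ℝ) ^ s * ((d:ℝ) ^ ((1:ℝ)/2) * (d:ℝ) ^ (-s)) := by ring
        _ = C₁ * (N:ℝ) ^ s * (d:ℝ) ^ (-(ε/2)) := by rw [h5]
    rw [Finset.sum_congr rfl hrw, ← Finset.mul_sum]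
    apply mul_le_mul_of_nonneg_left _ (mul_nonneg hC₁0.le (Real.rpow_nonneg hNnn _))
    calc ∑ d ∈ q.divisors, (d:ℝ) ^ (-(ε/2))
        ≤ ∏ p ∈ q.primeFactors, (1 - (p:ℝ) ^ (-(ε/2)))⁻¹ := by
          apply sum_rpow_neg_le_prod (by linarith) (fun p hp => Nat.prime_of_mem_primeFactors hp)
          intro d hd
          obtain ⟨hdq, _⟩ := Nat.mem_divisors.mp hd
          have hd0 : d ≠ 0 := fun h => by
            subst h
            exact hq0 (Nat.eq_zero_of_zero_dvd hdq)
          exact ⟨hd0, Nat.primeFactors_mono hdq hq0⟩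
      _ ≤ C₂ * (q:ℝ) ^ (ε/2) := hC₂ q hq0
  have hC₂q : (0:ℝ) ≤ C₂ * (q:ℝ) ^ (ε/2) := mul_nonneg hC₂0.le (Real.rpow_nonneg (by linarith) _)
  calc ∑ n ∈ Finset.Icc 1 N, (rad (n*q) : ℝ) ^ (-(1:ℝ)/2)
      ≤ (rad q : ℝ) ^ (-(1:ℝ)/2) *
          ∑ n ∈ Finset.Icc 1 N, (Nat.gcd n q : ℝ) ^ ((1:ℝ)/2) * (rad n : ℝ) ^ (-(1:ℝ)/2) := step1
    _ ≤ (rad q : ℝ) ^ (-(1:ℝ)/2) * (C₁ * (N:ℝ) ^ s * (C₂ * (q:ℝ) ^ (ε/2))) :=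
        mul_le_mul_of_nonneg_left (le_trans step2 step3) (Real.rpow_nonneg hradq.le _)
    _ ≤ (rad q : ℝ) ^ (-(1:ℝ)/2) * (C₁ * X ^ s * (C₂ * (q:ℝ) ^ (ε/2))) := by
        apply mul_le_mul_of_nonneg_left _ (Real.rpow_nonneg hradq.le _)
        apply mul_le_mul_of_nonneg_right _ hC₂q
        apply mul_le_mul_of_nonneg_left _ hC₁0.le
        exact Real.rpow_le_rpow (Nat.cast_nonneg N) hNX hs0
    _ = (C₁ * C₂) * (rad q : ℝ) ^ (-(1:ℝ)/2) * X ^ ((1:ℝ)/2) * (X ^ (ε/2) * (q:ℝ) ^ (ε/2)) := by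
        rw [hs, show (1:ℝ)/2 + 2*(ε/4) = (1:ℝ)/2 + ε/2 by ring, Real.rpow_add hXpos]
        ring
    _ = (C₁ * C₂) * (rad q : ℝ) ^ (-(1:ℝ)/2) * X ^ ((1:ℝ)/2) * ((q:ℝ) * X) ^ (ε/2) := by
        rw [Real.mul_rpow (by linarith : (0:ℝ) ≤ (q:ℝ)) hXpos.le]
        ring
    _ ≤ (C₁ * C₂) * (rad q : ℝ) ^ (-(1:ℝ)/2) * X ^ ((1:ℝ)/2) * ((q:ℝ) * X) ^ ε := by
        apply mul_le_mul_of_nonneg_left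
        · apply Real.rpow_le_rpow_of_exponent_le _ (by linarith : ε/2 ≤ ε)
          nlinarith
        · apply mul_nonneg
          apply mul_nonneg (by positivity)
          · exact Real.rpow_nonneg hradq.le _
          · exact Real.rpow_nonneg hXpos.le _
end

section
/- Let p be a prime, let γ ≥ 1 and μ ≥ 0 be integers, and let χ be a Dirichlet character of modulus p^L with 1 ≤ L ≤ γ + μ and conductor p^{e}. Then Σ_{t mod p^γ, p ∤ t} χ(1 + p^μ t) equals: p^γ − p^{γ−1} if μ ≥ 1 and e ≤ μ; −p^{γ−1} if μ ≥ 1 and e = μ+1; p^γ − 2p^{γ−1} if μ = 0 and e = 0; −p^{γ−1} if μ = 0 and e = 1; and 0 in all remaining cases. -/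
open Finset

private lemma sum_range_mul_of_periodic {M : Type*} [AddCommMonoid M] (f : ℕ → M) (m n : ℕ)
    (h : ∀ t, f (t + n) = f t) :
    ∑ t ∈ Finset.range (m * n), f t = m • ∑ t ∈ Finset.range n, f t := by
  have aux : ∀ k t, f (t + k * n) = f t := by
    intro k
    induction k with
    | zero => intro t; simp
    | succ k ih =>
      intro t
      have h1 : t + (k + 1) * n = (t + k * n) + n := by ring
      rw [h1, h, ih]
  induction m with
  | zero => simp
  | succ m ih =>
    rw [Nat.succ_mul, Finset.sum_range_add, ih, succ_nsmul]
    congr 1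
    refine Finset.sum_congr rfl fun i _ => ?_
    rw [add_comm (m * n) i, aux]

private lemma sumT (p : ℕ) (hp : p.Prime) {L e : ℕ} (hL₁ : 1 ≤ L)
    (χ : DirichletCharacter ℂ (p ^ L)) (he : χ.conductor = p ^ e)
    (γ μ : ℕ) (hμ : 1 ≤ μ) (hLγμ : L ≤ γ + μ) :
    ∑ t ∈ Finset.range (p ^ γ), χ (((1 + p ^ μ * t : ℕ) : ZMod (p ^ L)))
      = if e ≤ μ then (p : ℂ) ^ γ else 0 := by
  classical
  have hp1 : 1 < p := hp.one_lt
  haveI : NeZero (p ^ L) := ⟨pow_ne_zero _ hp.pos.ne'⟩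
  haveI : NeZero (p ^ e) := ⟨pow_ne_zero _ hp.pos.ne'⟩
  haveI : NeZero (p ^ μ) := ⟨pow_ne_zero _ hp.pos.ne'⟩
  have hpLne1 : p ^ L ≠ 1 := Nat.ne_of_gt (Nat.one_lt_pow (by omega) hp1)
  have hel : e ≤ L := by
    have hdvd : p ^ e ∣ p ^ L := he ▸ χ.conductor_dvd_level
    exact (Nat.pow_dvd_pow_iff_le_right hp1).mp hdvd
  set K := L - μ with hKdef
  have hKγ : K ≤ γ := by omega
  have hμK : L ≤ μ + K := by omega
  have hcop : ∀ t : ℕ, Nat.Coprime (1 + p ^ μ * t) (p ^ L) := by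
    intro t
    refine Nat.Coprime.pow_right _ ?_
    have hnd : ¬ p ∣ (1 + p ^ μ * t) := by
      intro hdvd
      have h1 : p ∣ p ^ μ * t := Dvd.dvd.mul_right (dvd_pow_self p (by omega)) t
      have h2 : p ∣ 1 := (Nat.dvd_add_right h1).mp (by rwa [Nat.add_comm] at hdvd)
      have := Nat.le_of_dvd one_pos h2
      omega
    exact (Nat.Prime.coprime_iff_not_dvd hp).mpr hnd |>.symm
  have hper : ∀ t, χ (((1 + p ^ μ * (t + p ^ K) : ℕ) : ZMod (p ^ L)))
      = χ (((1 + p ^ μ * t : ℕ) : ZMod (p ^ L))) := by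
    intro t
    have h1 : (1 + p ^ μ * (t + p ^ K) : ℕ) = (1 + p ^ μ * t) + p ^ μ * p ^ K := by ring
    have h2 : ((p ^ μ * p ^ K : ℕ) : ZMod (p ^ L)) = 0 := by
      rw [← pow_add]
      exact (ZMod.natCast_eq_zero_iff _ _).mpr (pow_dvd_pow p hμK)
    rw [h1, Nat.cast_add, h2, add_zero]
  have hinner : ∑ t ∈ Finset.range (p ^ K), χ (((1 + p ^ μ * t : ℕ) : ZMod (p ^ L)))
      = if e ≤ μ then (p : ℂ) ^ K else 0 := by
    by_cases hcase : e ≤ μ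
    · rw [if_pos hcase]
      have hFT : χ.FactorsThrough (p ^ e) := by
        rw [← he]; exact DirichletCharacter.factorsThrough_conductor χ
      obtain ⟨hd, χ₁, hχ₁⟩ := hFT
      have hone : ∀ t : ℕ, χ (((1 + p ^ μ * t : ℕ) : ZMod (p ^ L))) = 1 := by
        intro t
        have hu : IsUnit (((1 + p ^ μ * t : ℕ) : ZMod (p ^ L))) := by
          rw [ZMod.isUnit_iff_coprime]
          exact hcop t
        calc χ (((1 + p ^ μ * t : ℕ) : ZMod (p ^ L)))
            = χ ((hu.unit : (ZMod (p ^ L))ˣ) : ZMod (p ^ L)) := by rw [IsUnit.unit_spec]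
          _ = χ₁ (ZMod.cast ((hu.unit : (ZMod (p ^ L))ˣ) : ZMod (p ^ L))) := by
              conv_lhs => rw [hχ₁]
              exact DirichletCharacter.changeLevel_eq_cast_of_dvd χ₁ hd hu.unit
          _ = 1 := by
              rw [IsUnit.unit_spec, ZMod.cast_natCast hd]
              have h3 : ((1 + p ^ μ * t : ℕ) : ZMod (p ^ e)) = 1 := by
                rw [Nat.cast_add, Nat.cast_one,
                  (ZMod.natCast_eq_zero_iff _ _).mpr
                    (dvd_mul_of_dvd_left (pow_dvd_pow p hcase) t), add_zero]
              rw [h3, map_one]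
      rw [Finset.sum_congr rfl fun t _ => hone t, Finset.sum_const, Finset.card_range,
        nsmul_eq_mul, mul_one]
      push_cast
      ring
    · rw [if_neg hcase]
      have hμL : μ < L := by
        by_contra hcon
        exact hcase (by omega)
      have hd : p ^ μ ∣ p ^ L := pow_dvd_pow p hμL.le
      have hnFT : ¬ χ.FactorsThrough (p ^ μ) := by
        intro hFT
        have h1 : χ.conductor ≤ p ^ μ :=
          Nat.sInf_le ((DirichletCharacter.mem_conductorSet_iff χ).mpr hFT)
        rw [he] at h1
        exact hcase ((Nat.pow_le_pow_iff_right hp1).mp h1)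
      rw [DirichletCharacter.factorsThrough_iff_ker_unitsMap hd, SetLike.le_def] at hnFT
      push_neg at hnFT
      obtain ⟨u₀, hu₀1, hu₀ne⟩ := hnFT
      rw [MonoidHom.mem_ker] at hu₀1 hu₀ne
      have hχu₀ : χ (↑u₀) ≠ 1 := by
        intro hcon
        apply hu₀ne
        apply Units.ext
        rw [Units.val_one, MulChar.coe_toUnitHom]
        exact hcon
      set T : Finset ((ZMod (p ^ L))ˣ) :=
        Finset.univ.filter (fun u => ZMod.unitsMap hd u = 1) with hT
      have hmem : ∀ u, u ∈ T ↔ ZMod.unitsMap hd u = 1 := by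
        intro u; simp [hT]
      have hlt : ∀ a ∈ Finset.range (p ^ K), 1 + p ^ μ * a < p ^ L := by
        intro a ha
        rw [Finset.mem_range] at ha
        have h2 : 2 ≤ p ^ μ := le_trans hp.two_le (Nat.le_self_pow (by omega) p)
        have h3 : p ^ μ * a + p ^ μ ≤ p ^ L := by
          calc p ^ μ * a + p ^ μ = p ^ μ * (a + 1) := by ring
            _ ≤ p ^ μ * p ^ K := Nat.mul_le_mul (Nat.le_refl _) ha
            _ = p ^ L := by rw [← pow_add]; congr 1; omega
        omega
      have hstep : ∑ t ∈ Finset.range (p ^ K), χ (((1 + p ^ μ * t : ℕ) : ZMod (p ^ L)))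
          = ∑ u ∈ T, χ (↑u) := by
        refine Finset.sum_bij (fun t _ => ZMod.unitOfCoprime _ (hcop t)) ?_ ?_ ?_ ?_
        · intro t _
          rw [hmem]
          apply Units.ext
          rw [ZMod.unitsMap_def, Units.coe_map, Units.val_one]
          simp only [ZMod.coe_unitOfCoprime, MonoidHom.coe_coe, map_natCast]
          rw [Nat.cast_add, Nat.cast_one,
            (ZMod.natCast_eq_zero_iff _ _).mpr (dvd_mul_right (p ^ μ) t), add_zero]
        · intro a₁ ha₁ a₂ ha₂ hEq
          have h1 : (((1 + p ^ μ * a₁ : ℕ) : ZMod (p ^ L)))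
              = (((1 + p ^ μ * a₂ : ℕ) : ZMod (p ^ L))) := by
            have h2 := congrArg (Units.val) hEq
            simpa [ZMod.coe_unitOfCoprime] using h2
          have hv := congrArg ZMod.val h1
          rw [ZMod.val_cast_of_lt (hlt _ ha₁), ZMod.val_cast_of_lt (hlt _ ha₂)] at hv
          exact Nat.eq_of_mul_eq_mul_left (pow_pos hp.pos μ)
            (by omega : p ^ μ * a₁ = p ^ μ * a₂)
        · intro u hu
          rw [hmem] at hu
          set v := (u : ZMod (p ^ L)).val with hv
          have hvlt : v < p ^ L := ZMod.val_lt _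
          have hvpos : 1 ≤ v := by
            rcases Nat.eq_zero_or_pos v with h0 | h1
            · exfalso
              have hz : (u : ZMod (p ^ L)) = 0 := by
                rw [← ZMod.val_eq_zero]; exact h0
              have h2 := u.mul_inv
              rw [hz, zero_mul] at h2
              haveI : Nontrivial (ZMod (p ^ L)) := by
                rw [ZMod.nontrivial_iff]; exact hpLne1
              exact zero_ne_one h2
            · exact h1
          have hcast1 : ((v : ℕ) : ZMod (p ^ μ)) = 1 := by
            have h2 := congrArg Units.val hu
            rw [ZMod.unitsMap_def, Units.coe_map, Units.val_one] at h2
            rw [ZMod.natCast_val, ← h2]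
            simp [ZMod.castHom_apply]
          have hdvd1 : p ^ μ ∣ v - 1 := by
            rw [← ZMod.natCast_eq_zero_iff]
            rw [Nat.cast_sub hvpos, hcast1, Nat.cast_one, sub_self]
          have hmul : p ^ μ * ((v - 1) / p ^ μ) = v - 1 := Nat.mul_div_cancel' hdvd1
          have hKL : p ^ μ * p ^ K = p ^ L := by rw [← pow_add]; congr 1; omega
          refine ⟨(v - 1) / p ^ μ, ?_, ?_⟩
          · rw [Finset.mem_range]
            have h3 : p ^ μ * ((v - 1) / p ^ μ) < p ^ μ * p ^ K := by omega
            exact Nat.lt_of_mul_lt_mul_left h3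
          · apply Units.ext
            rw [ZMod.coe_unitOfCoprime]
            have hval : 1 + p ^ μ * ((v - 1) / p ^ μ) = v := by omega
            rw [hval]
            exact ZMod.natCast_rightInverse _
        · intro t _
          rw [ZMod.coe_unitOfCoprime]
      rw [hstep]
      have hre : ∑ u ∈ T, χ (↑(u₀ * u)) = ∑ u ∈ T, χ (↑u) := by
        refine Finset.sum_nbij' (fun u => u₀ * u) (fun u => u₀⁻¹ * u) ?_ ?_ ?_ ?_ ?_
        · intro u hu
          rw [hmem] at hu ⊢
          rw [map_mul, hu₀1, hu, mul_one]
        · intro u hu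
          rw [hmem] at hu ⊢
          rw [map_mul, map_inv, hu₀1, hu, inv_one, mul_one]
        · intro u _; group
        · intro u _; group
        · intro u _; rfl
      have hfactor : ∑ u ∈ T, χ (↑(u₀ * u)) = χ (↑u₀) * ∑ u ∈ T, χ (↑u) := by
        rw [Finset.mul_sum]
        refine Finset.sum_congr rfl fun u _ => ?_
        rw [Units.val_mul, map_mul]
      have h0 : (χ (↑u₀) - 1) * ∑ u ∈ T, χ (↑u) = 0 := by
        rw [sub_mul, one_mul, ← hfactor, hre, sub_self]
      rcases mul_eq_zero.mp h0 with h | h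
      · exact absurd (sub_eq_zero.mp h) hχu₀
      · exact h
  have hγeq : p ^ γ = p ^ (γ - K) * p ^ K := by rw [← pow_add]; congr 1; omega
  rw [hγeq, sum_range_mul_of_periodic _ _ _ hper, hinner]
  split_ifs
  · rw [nsmul_eq_mul]
    push_cast
    rw [← pow_add]
    congr 1
    omega
  · simp

private lemma sumT0 (p : ℕ) (hp : p.Prime) {L e : ℕ} (hL₁ : 1 ≤ L)
    (χ : DirichletCharacter ℂ (p ^ L)) (he : χ.conductor = p ^ e)
    (γ : ℕ) (hLγ : L ≤ γ) :
    ∑ t ∈ Finset.range (p ^ γ), χ (((1 + t : ℕ) : ZMod (p ^ L)))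
      = if e = 0 then (p : ℂ) ^ γ - (p : ℂ) ^ (γ - 1) else 0 := by
  classical
  have hp1 : 1 < p := hp.one_lt
  haveI : NeZero (p ^ L) := ⟨pow_ne_zero _ hp.pos.ne'⟩
  have hpLne1 : p ^ L ≠ 1 := Nat.ne_of_gt (Nat.one_lt_pow (by omega) hp1)
  have hper : ∀ t, χ (((1 + (t + p ^ L) : ℕ) : ZMod (p ^ L)))
      = χ (((1 + t : ℕ) : ZMod (p ^ L))) := by
    intro t
    have h1 : (1 + (t + p ^ L) : ℕ) = (1 + t) + p ^ L := by ring
    rw [h1, Nat.cast_add, ZMod.natCast_self, add_zero]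
  have hγeq : p ^ γ = p ^ (γ - L) * p ^ L := by rw [← pow_add]; congr 1; omega
  rw [hγeq, sum_range_mul_of_periodic _ _ _ hper]
  have hinner : ∑ t ∈ Finset.range (p ^ L), χ (((1 + t : ℕ) : ZMod (p ^ L)))
      = ∑ x : ZMod (p ^ L), χ x := by
    refine Finset.sum_nbij' (fun t => (((1 + t : ℕ) : ZMod (p ^ L))))
      (fun x => (x - 1).val) ?_ ?_ ?_ ?_ ?_
    · intro t _; exact Finset.mem_univ _
    · intro x _
      rw [Finset.mem_range]
      exact ZMod.val_lt _
    · intro t ht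
      rw [Finset.mem_range] at ht
      show ((((1 + t : ℕ) : ZMod (p ^ L)) - 1).val) = t
      rw [Nat.cast_add, Nat.cast_one, add_sub_cancel_left, ZMod.val_cast_of_lt ht]
    · intro x _
      show ((1 + (x - 1).val : ℕ) : ZMod (p ^ L)) = x
      rw [Nat.cast_add, Nat.cast_one, ZMod.natCast_rightInverse _]
      ring
    · intro t _; rfl
  rw [hinner]
  by_cases h1 : χ = 1
  · have he0 : e = 0 := by
      have h2 : χ.conductor = 1 := by
        rw [h1]; exact DirichletCharacter.conductor_one
      rw [he] at h2
      by_contra hcon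
      have h3 : p ≤ p ^ e := Nat.le_self_pow hcon p
      omega
    rw [if_pos he0, h1, MulChar.sum_one_eq_card_units, ZMod.card_units_eq_totient,
      Nat.totient_prime_pow hp (by omega : 0 < L), nsmul_eq_mul]
    have e1 : (p : ℂ) ^ (γ - L) * (p : ℂ) ^ (L - 1) = (p : ℂ) ^ (γ - 1) := by
      rw [← pow_add]; congr 1; omega
    have e2 : (p : ℂ) ^ (γ - 1) * (p : ℂ) = (p : ℂ) ^ γ := by
      rw [← pow_succ]; congr 1; omega
    push_cast [Nat.cast_sub hp.pos]
    calc ((p : ℂ) ^ (γ - L)) * ((p : ℂ) ^ (L - 1) * ((p : ℂ) - 1))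
        = ((p : ℂ) ^ (γ - L) * (p : ℂ) ^ (L - 1)) * ((p : ℂ) - 1) := by ring
      _ = (p : ℂ) ^ (γ - 1) * ((p : ℂ) - 1) := by rw [e1]
      _ = (p : ℂ) ^ (γ - 1) * (p : ℂ) - (p : ℂ) ^ (γ - 1) := by ring
      _ = (p : ℂ) ^ γ - (p : ℂ) ^ (γ - 1) := by rw [e2]
  · rw [MulChar.sum_eq_zero_of_ne_one h1, smul_zero]
    have hne : e ≠ 0 := by
      intro h0
      apply h1
      apply DirichletCharacter.eq_one_iff_conductor_eq_one.mpr
      rw [he, h0, pow_zero]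
    rw [if_neg hne]

/-- Evaluation of the character sum `Σ_{t mod p^γ, p ∤ t} χ(1 + p^μ t)` for a
Dirichlet character `χ` of modulus `p^L` (with `1 ≤ L ≤ γ + μ`) and conductor `p^e`:
it equals `p^γ - p^{γ-1}` if `μ ≥ 1` and `e ≤ μ`; `-p^{γ-1}` if `μ ≥ 1` and `e = μ+1`;
`p^γ - 2p^{γ-1}` if `μ = 0` and `e = 0`; `-p^{γ-1}` if `μ = 0` and `e = 1`;
and `0` in all remaining cases. -/
theorem character_sum_eval
    (p : ℕ) (hp : p.Prime) (γ μ L e : ℕ) (hγ : 1 ≤ γ)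
    (hL₁ : 1 ≤ L) (hL₂ : L ≤ γ + μ)
    (χ : DirichletCharacter ℂ (p ^ L)) (he : χ.conductor = p ^ e) :
    ∑ t ∈ Finset.filter (fun t => ¬ (p ∣ t)) (Finset.range (p ^ γ)),
        χ (((1 + p ^ μ * t : ℕ) : ZMod (p ^ L)))
      = if 1 ≤ μ ∧ e ≤ μ then ((p : ℂ) ^ γ - (p : ℂ) ^ (γ - 1))
        else if 1 ≤ μ ∧ e = μ + 1 then -((p : ℂ) ^ (γ - 1))
        else if μ = 0 ∧ e = 0 then ((p : ℂ) ^ γ - 2 * (p : ℂ) ^ (γ - 1))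
        else if μ = 0 ∧ e = 1 then -((p : ℂ) ^ (γ - 1))
        else 0 := by
  classical
  have hp1 : 1 < p := hp.one_lt
  have hsplit := Finset.sum_filter_add_sum_filter_not (Finset.range (p ^ γ))
    (fun t => p ∣ t) (fun t => χ (((1 + p ^ μ * t : ℕ) : ZMod (p ^ L))))
  have hdvdsum : ∑ t ∈ Finset.filter (fun t => p ∣ t) (Finset.range (p ^ γ)),
      χ (((1 + p ^ μ * t : ℕ) : ZMod (p ^ L)))
      = ∑ s ∈ Finset.range (p ^ (γ - 1)), χ (((1 + p ^ (μ + 1) * s : ℕ) : ZMod (p ^ L))) := by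
    refine Finset.sum_nbij' (fun t => t / p) (fun s => p * s) ?_ ?_ ?_ ?_ ?_
    · intro t ht
      rw [Finset.mem_filter, Finset.mem_range] at ht
      rw [Finset.mem_range]
      rw [Nat.div_lt_iff_lt_mul hp.pos]
      calc t < p ^ γ := ht.1
        _ = p ^ (γ - 1) * p := by rw [← pow_succ]; congr 1; omega
    · intro s hs
      rw [Finset.mem_range] at hs
      rw [Finset.mem_filter, Finset.mem_range]
      constructor
      · calc p * s < p * p ^ (γ - 1) := by
              exact (Nat.mul_lt_mul_left hp.pos).mpr hs
          _ = p ^ γ := by rw [← pow_succ']; congr 1; omega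
      · exact dvd_mul_right p s
    · intro t ht
      rw [Finset.mem_filter] at ht
      exact Nat.mul_div_cancel' ht.2
    · intro s _
      exact Nat.mul_div_cancel_left s hp.pos
    · intro t ht
      rw [Finset.mem_filter] at ht
      congr 2
      have h3 : p * (t / p) = t := Nat.mul_div_cancel' ht.2
      calc 1 + p ^ μ * t = 1 + p ^ μ * (p * (t / p)) := by rw [h3]
        _ = 1 + p ^ (μ + 1) * (t / p) := by ring
  have hTμ1 : ∑ s ∈ Finset.range (p ^ (γ - 1)), χ (((1 + p ^ (μ + 1) * s : ℕ) : ZMod (p ^ L)))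
      = if e ≤ μ + 1 then (p : ℂ) ^ (γ - 1) else 0 :=
    sumT p hp hL₁ χ he (γ - 1) (μ + 1) (by omega) (by omega)
  have hB : ∑ t ∈ Finset.filter (fun t => ¬ (p ∣ t)) (Finset.range (p ^ γ)),
      χ (((1 + p ^ μ * t : ℕ) : ZMod (p ^ L)))
      = (∑ t ∈ Finset.range (p ^ γ), χ (((1 + p ^ μ * t : ℕ) : ZMod (p ^ L))))
        - (if e ≤ μ + 1 then (p : ℂ) ^ (γ - 1) else 0) := by
    rw [← hTμ1, ← hdvdsum, eq_sub_iff_add_eq, add_comm]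
    exact hsplit
  rw [hB]
  rcases Nat.eq_zero_or_pos μ with hμ0 | hμ1
  · subst hμ0
    have hTfull : ∑ t ∈ Finset.range (p ^ γ), χ (((1 + p ^ 0 * t : ℕ) : ZMod (p ^ L)))
        = if e = 0 then (p : ℂ) ^ γ - (p : ℂ) ^ (γ - 1) else 0 := by
      simp only [pow_zero, one_mul]
      exact sumT0 p hp hL₁ χ he γ (by omega)
    rw [hTfull]
    by_cases he0 : e = 0
    · rw [if_pos he0, if_pos (by omega : e ≤ 0 + 1), if_neg (by omega),
        if_neg (by omega), if_pos ⟨rfl, he0⟩]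
      ring
    · by_cases he1 : e = 1
      · rw [if_neg he0, if_pos (by omega : e ≤ 0 + 1), if_neg (by omega),
          if_neg (by omega), if_neg (by simp [he0]), if_pos ⟨rfl, he1⟩]
        ring
      · rw [if_neg he0, if_neg (by omega : ¬ e ≤ 0 + 1), if_neg (by omega),
          if_neg (by omega), if_neg (by simp [he0]), if_neg (by simp [he1])]
        ring
  · have hTfull : ∑ t ∈ Finset.range (p ^ γ), χ (((1 + p ^ μ * t : ℕ) : ZMod (p ^ L)))
        = if e ≤ μ then (p : ℂ) ^ γ else 0 :=
      sumT p hp hL₁ χ he γ μ hμ1 hL₂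
    rw [hTfull]
    by_cases h1 : e ≤ μ
    · rw [if_pos h1, if_pos (by omega : e ≤ μ + 1), if_pos ⟨hμ1, h1⟩]
    · by_cases h2 : e ≤ μ + 1
      · rw [if_neg h1, if_pos h2, if_neg (by omega), if_pos ⟨hμ1, by omega⟩]
        ring
      · rw [if_neg h1, if_neg h2, if_neg (by omega), if_neg (by omega),
          if_neg (by omega), if_neg (by omega)]
        ring
end
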